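/- arXiv:math/0406370 — 3 statements merged into one kernel-verified Lean document; each statement's English description precedes it below -/
import Mathlib

section
/- Let 𝒮 be a μ-a.e. λ-Morse cover of X, Y a Banach space, and f : X → Y μ-measurable with ‖f‖ μ-integrable on X. Let L ⊆ X be the set of points x that are Lebesgue points of f with respect to f(x), and let ε > 0. Then there is a gauge function δ : L → (0,1] such that for every finite or countably infinite pairwise disjoint sequence ⟨S_i(x_i)⟩ of δ-fine sets from 𝒮 with tags x_i ∈ L, one has Σ_i ∫_{S_i} ‖f(y) − f(x_i)‖ dμ(y) < ε. -/
open MeasureTheory Set Metric Filter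

/-- `S` is a `λ`-Morse set with tag `a`: for some `r > 0`, `B(a,r) ⊆ S ⊆ B(a,λr)`
(closed balls) and `S` is starlike with respect to `B(a,r)`. -/
def IsMorseSet {X : Type*} [NormedAddCommGroup X] [NormedSpace ℝ X]
    (lam : ℝ) (a : X) (S : Set X) : Prop :=
  ∃ r > (0:ℝ), Metric.closedBall a r ⊆ S ∧ S ⊆ Metric.closedBall a (lam * r) ∧
    ∀ y ∈ Metric.closedBall a r, ∀ x ∈ S, segment ℝ y x ⊆ S

/-- `𝒮` (a collection of tagged sets) is a fine, measurable, `λ`-Morse cover of `Ω`: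
every member is a measurable λ-Morse subset of `Ω` with the indicated tag, and every point
of `Ω` is the tag of sets of `𝒮` of arbitrarily small diameter. -/
def IsFineMorseCover {X : Type*} [NormedAddCommGroup X] [NormedSpace ℝ X] [MeasurableSpace X]
    (lam : ℝ) (Ω : Set X) (𝒮 : Set (X × Set X)) : Prop :=
  (∀ p ∈ 𝒮, IsMorseSet lam p.1 p.2 ∧ MeasurableSet p.2 ∧ p.2 ⊆ Ω) ∧
  ∀ a ∈ Ω, ∀ ε > (0:ℝ), ∃ S : Set X, (a, S) ∈ 𝒮 ∧ Metric.diam S < ε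

/-- The (finite or countably infinite) sequence of tagged sets `T` indexed by `I ⊆ ℕ`
is `μ`-exhausting of `Ω` within the collection `𝒮`: its members belong to `𝒮`,
are pairwise disjoint, and cover all but a `μ`-null subset of `Ω`. -/
def IsExhausting {X : Type*} [MeasurableSpace X] (μ : Measure X) (Ω : Set X)
    (𝒮 : Set (X × Set X)) (I : Set ℕ) (T : ℕ → X × Set X) : Prop :=
  (∀ i ∈ I, T i ∈ 𝒮) ∧
  (∀ i ∈ I, ∀ j ∈ I, i ≠ j → Disjoint (T i).2 (T j).2) ∧
  μ (Ω \ ⋃ i ∈ I, (T i).2) = 0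

/-- `𝒮` is a `μ`-a.e. `λ`-Morse cover of `Ω`: it is a fine measurable λ-Morse cover and,
for every nonempty open `U ⊆ Ω` and every gauge `δ : U → (0,1]`, there is a sequence of
`δ`-fine sets from `𝒮`, each contained in `U`, that is `μ`-exhausting of `U`. -/
def IsAEMorseCover {X : Type*} [NormedAddCommGroup X] [NormedSpace ℝ X] [MeasurableSpace X]
    (μ : Measure X) (lam : ℝ) (Ω : Set X) (𝒮 : Set (X × Set X)) : Prop :=
  IsFineMorseCover lam Ω 𝒮 ∧
  ∀ U : Set X, IsOpen U → U.Nonempty → U ⊆ Ω →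
    ∀ δ : X → ℝ, (∀ x ∈ U, δ x ∈ Set.Ioc (0:ℝ) 1) →
      ∃ I T, IsExhausting μ U 𝒮 I T ∧
        ∀ i ∈ I, (T i).2 ⊆ U ∧ (T i).2 ⊆ Metric.closedBall (T i).1 (δ (T i).1)

/-- `f` is `μ`-measurable: there is a sequence of simple functions converging to `f`
`μ`-almost everywhere. -/
def MuMeasurable {X Y : Type*} [MeasurableSpace X] [NormedAddCommGroup Y]
    (μ : Measure X) (f : X → Y) : Prop :=
  ∃ F : ℕ → MeasureTheory.SimpleFunc X Y,
    ∀ᵐ x ∂μ, Filter.Tendsto (fun n => F n x) Filter.atTop (nhds (f x))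

/-- `a` is a point of approximate continuity of `f` (relative to the tagged collection
`𝒮`): for all `ε, η > 0` there is `R > 0` such that every `S ∈ 𝒮` with tag `a` contained
in `B(a,R)` satisfies `μ {x ∈ S | ‖f a - f x‖ > η} ≤ ε · μ S`. -/
def IsApproxContPt {X Y : Type*} [NormedAddCommGroup X] [MeasurableSpace X]
    [NormedAddCommGroup Y] (μ : Measure X) (𝒮 : Set (X × Set X)) (f : X → Y) (a : X) : Prop :=
  ∀ ε > (0:ℝ), ∀ η > (0:ℝ), ∃ R > (0:ℝ), ∀ S : Set X, (a, S) ∈ 𝒮 →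
    S ⊆ Metric.closedBall a R →
    μ {x ∈ S | η < ‖f a - f x‖} ≤ ENNReal.ofReal ε * μ S

/-- `a` is a Lebesgue point of `g` with respect to the value `c` (relative to the tagged
collection `𝒮`): for every `ε > 0` there is `R > 0` such that every `S ∈ 𝒮` with tag `a`
contained in `B(a,R)` satisfies `∫_S ‖g x - c‖ dμ ≤ ε · μ S`. -/
def IsLebesguePt {X Y : Type*} [NormedAddCommGroup X] [MeasurableSpace X]
    [NormedAddCommGroup Y] (μ : Measure X) (𝒮 : Set (X × Set X)) (g : X → Y) (a : X)
    (c : Y) : Prop :=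
  ∀ ε > (0:ℝ), ∃ R > (0:ℝ), ∀ S : Set X, (a, S) ∈ 𝒮 → S ⊆ Metric.closedBall a R →
    ∫⁻ x in S, ‖g x - c‖₊ ∂μ ≤ ENNReal.ofReal ε * μ S

/-- Let `𝒮` be a `μ`-a.e. `λ`-Morse cover of `X`, `Y` a Banach space, `f : X → Y`
`μ`-measurable with `‖f‖` `μ`-integrable, and let `L` be the set of Lebesgue points
`x` of `f` with respect to `f x`.  Given `ε > 0`, there is a gauge `δ : L → (0,1]`
such that for every finite or countably infinite pairwise disjoint sequence
`⟨S_i(x_i)⟩` of `δ`-fine sets from `𝒮` with tags `x_i ∈ L`, one has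
`Σ_i ∫_{S_i} ‖f(y) − f(x_i)‖ dμ(y) < ε`. -/
theorem gauge_small_on_lebesgue_points
    {X Y : Type*} [NormedAddCommGroup X] [NormedSpace ℝ X] [FiniteDimensional ℝ X]
    [MeasurableSpace X] [OpensMeasurableSpace X]
    [NormedAddCommGroup Y] [NormedSpace ℝ Y] [CompleteSpace Y]
    (μ : Measure X) [μ.Regular] [μ.IsComplete]
    (lam : ℝ) (hlam : 1 ≤ lam)
    (𝒮 : Set (X × Set X)) (h𝒮 : IsAEMorseCover μ lam Set.univ 𝒮)
    (f : X → Y) (hf : MuMeasurable μ f)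
    (hint : Integrable (fun x => ‖f x‖) μ)
    (L : Set X) (hL : L = {x : X | IsLebesguePt μ 𝒮 f x (f x)})
    (ε : ℝ) (hε : 0 < ε) :
    ∃ δ : X → ℝ, (∀ x ∈ L, δ x ∈ Set.Ioc (0:ℝ) 1) ∧
      ∀ (I : Set ℕ) (T : ℕ → X × Set X),
        (∀ i ∈ I, T i ∈ 𝒮 ∧ (T i).1 ∈ L ∧
          (T i).2 ⊆ Metric.closedBall (T i).1 (δ (T i).1)) →
        (∀ i ∈ I, ∀ j ∈ I, i ≠ j → Disjoint (T i).2 (T j).2) →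
        (∑' i : I, ∫⁻ y in (T i).2, ‖f y - f (T i).1‖₊ ∂μ) < ENNReal.ofReal ε := by
  classical
  subst hL
  set L : Set X := {x : X | IsLebesguePt μ 𝒮 f x (f x)} with hLdef
  -- the balls and the constants
  set B : ℕ → ENNReal := fun n => μ (Metric.closedBall (0:X) (n+1)) with hBdef
  have hBfin : ∀ n, B n ≠ ⊤ := fun n =>
    ((isCompact_closedBall _ _).measure_lt_top).ne
  set c : ℕ → ℝ := fun n => ε / (2^(n+2) * ((B n).toReal + 1)) with hcdef
  have hcpos : ∀ n, 0 < c n := by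
    intro n
    apply div_pos hε
    have := ENNReal.toReal_nonneg (a := B n)
    positivity
  have key : ∀ x, x ∈ L → ∃ R > (0:ℝ),
      ∀ S : Set X, (x, S) ∈ 𝒮 → S ⊆ Metric.closedBall x R →
        ∫⁻ y in S, ‖f y - f x‖₊ ∂μ ≤ ENNReal.ofReal (c ⌈‖x‖⌉₊) * μ S :=
    fun x hx => hx (c ⌈‖x‖⌉₊) (hcpos _)
  choose R hRpos hR using key
  refine ⟨fun x => if h : x ∈ L then min (R x h) 1 else 1, ?_, ?_⟩
  · intro x hx
    simp only [dif_pos hx]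
    exact ⟨lt_min (hRpos x hx) one_pos, min_le_right _ _⟩
  intro I T hT hdisj
  -- basic facts about each member
  have hmes : ∀ i ∈ I, MeasurableSet (T i).2 := fun i hi =>
    (h𝒮.1.1 _ (hT i hi).1).2.1
  have hsub1 : ∀ i ∈ I, (T i).2 ⊆ Metric.closedBall (T i).1 1 := by
    intro i hi
    refine (hT i hi).2.2.trans (Metric.closedBall_subset_closedBall ?_)
    simp only [dif_pos (hT i hi).2.1]
    exact min_le_right _ _
  have hsubR : ∀ i (hi : i ∈ I),
      (T i).2 ⊆ Metric.closedBall (T i).1 (R (T i).1 (hT i hi).2.1) := by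
    intro i hi
    refine (hT i hi).2.2.trans (Metric.closedBall_subset_closedBall ?_)
    simp only [dif_pos (hT i hi).2.1]
    exact min_le_left _ _
  have hball : ∀ i ∈ I, (T i).2 ⊆ Metric.closedBall (0:X) (⌈‖(T i).1‖⌉₊ + 1) := by
    intro i hi
    refine (hsub1 i hi).trans (Metric.closedBall_subset_closedBall' ?_)
    have h1 : ‖(T i).1‖ ≤ (⌈‖(T i).1‖⌉₊ : ℝ) := Nat.le_ceil _
    have : dist (T i).1 (0:X) = ‖(T i).1‖ := by simp
    linarith
  have hest : ∀ i ∈ I, ∫⁻ y in (T i).2, ‖f y - f (T i).1‖₊ ∂μ ≤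
      ENNReal.ofReal (c ⌈‖(T i).1‖⌉₊) * μ (T i).2 := by
    intro i hi
    exact hR (T i).1 (hT i hi).2.1 (T i).2 (by simpa using (hT i hi).1) (hsubR i hi)
  -- per-index bound
  have step1 : ∑' i, I.indicator (fun i => ∫⁻ y in (T i).2, ‖f y - f (T i).1‖₊ ∂μ) i ≤
      ∑' i, (if i ∈ I then ENNReal.ofReal (c ⌈‖(T i).1‖⌉₊) * μ (T i).2 else 0) := by
    refine ENNReal.tsum_le_tsum fun i => ?_
    rw [Set.indicator_apply]
    split_ifs with hi
    · exact hest i hi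
    · exact le_rfl
  -- group by the value of the ceiling
  have step2 : ∑' i, (if i ∈ I then ENNReal.ofReal (c ⌈‖(T i).1‖⌉₊) * μ (T i).2 else 0) =
      ∑' (m : ℕ) (i : ℕ),
        (if ⌈‖(T i).1‖⌉₊ = m ∧ i ∈ I then ENNReal.ofReal (c m) * μ (T i).2 else 0) := by
    rw [ENNReal.tsum_comm]
    congr 1
    funext i
    rw [tsum_eq_single ⌈‖(T i).1‖⌉₊ (by intro m hm; rw [if_neg]; tauto)]
    by_cases hi : i ∈ I <;> simp [hi]
  -- bound each group
  have step3 : ∀ m : ℕ, ∑' (i : ℕ),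
      (if ⌈‖(T i).1‖⌉₊ = m ∧ i ∈ I then ENNReal.ofReal (c m) * μ (T i).2 else 0) ≤
      ENNReal.ofReal (ε / 2^(m+2)) := by
    intro m
    have hfact : ∀ i : ℕ,
        (if ⌈‖(T i).1‖⌉₊ = m ∧ i ∈ I then ENNReal.ofReal (c m) * μ (T i).2 else 0) =
        ENNReal.ofReal (c m) *
          (if ⌈‖(T i).1‖⌉₊ = m ∧ i ∈ I then μ (T i).2 else 0) := by
      intro i; split_ifs <;> simp
    simp only [hfact]
    rw [ENNReal.tsum_mul_left]
    set s : Set ℕ := {i | ⌈‖(T i).1‖⌉₊ = m ∧ i ∈ I} with hsdef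
    have hind : (fun i : ℕ => (if ⌈‖(T i).1‖⌉₊ = m ∧ i ∈ I then μ (T i).2 else 0)) =
        s.indicator (fun i => μ (T i).2) := by
      funext i
      rw [Set.indicator_apply]
      rfl
    have hsum : ∑' (i : ℕ), (if ⌈‖(T i).1‖⌉₊ = m ∧ i ∈ I then μ (T i).2 else 0) =
        ∑' (i : s), μ (T i).2 := by
      rw [hind]
      exact (tsum_subtype s fun i => μ (T i).2).symm
    have hd : s.PairwiseDisjoint (fun i => (T i).2) := fun i hi j hj hij =>
      hdisj i hi.2 j hj.2 hij
    have hmuu : ∑' (i : s), μ (T i).2 = μ (⋃ i ∈ s, (T i).2) :=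
      (measure_biUnion s.to_countable hd (fun i hi => hmes i hi.2)).symm
    have hle : μ (⋃ i ∈ s, (T i).2) ≤ B m := by
      apply measure_mono
      refine Set.iUnion₂_subset fun i hi => ?_
      have := hball i hi.2
      rw [hi.1] at this
      simpa using this
    calc ENNReal.ofReal (c m) *
          ∑' (i : ℕ), (if ⌈‖(T i).1‖⌉₊ = m ∧ i ∈ I then μ (T i).2 else 0)
        ≤ ENNReal.ofReal (c m) * B m := by
          rw [hsum, hmuu]
          exact mul_le_mul_right hle _
      _ ≤ ENNReal.ofReal (c m) * ENNReal.ofReal ((B m).toReal + 1) := by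
          refine mul_le_mul_right ?_ _
          conv_lhs => rw [← ENNReal.ofReal_toReal (hBfin m)]
          exact ENNReal.ofReal_le_ofReal (by linarith)
      _ = ENNReal.ofReal (c m * ((B m).toReal + 1)) :=
          (ENNReal.ofReal_mul (hcpos m).le).symm
      _ = ENNReal.ofReal (ε / 2^(m+2)) := by
          congr 1
          rw [hcdef]
          have h1 : (0:ℝ) < (B m).toReal + 1 := by
            have := ENNReal.toReal_nonneg (a := B m); linarith
          have h2 : (0:ℝ) < 2^(m+2) := by positivity
          field_simp
  -- sum the geometric series
  have hsummable : Summable (fun m : ℕ => ε / 2^(m+2)) := by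
    have : (fun m : ℕ => ε / 2^(m+2)) = fun m : ℕ => (ε/4) * (1/2:ℝ)^m := by
      funext m
      rw [pow_add]
      ring
      simp only [one_div]
    rw [this]
    exact (summable_geometric_of_lt_one (by norm_num) (by norm_num)).mul_left _
  have hgeo : ∑' (m : ℕ), ENNReal.ofReal (ε / 2^(m+2)) = ENNReal.ofReal (ε/2) := by
    rw [← ENNReal.ofReal_tsum_of_nonneg (fun m => by positivity) hsummable]
    congr 1
    have : (fun m : ℕ => ε / 2^(m+2)) = fun m : ℕ => (ε/4) * (1/2:ℝ)^m := by
      funext m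
      rw [pow_add]
      ring
      simp only [one_div]
    rw [this, tsum_mul_left, tsum_geometric_two]
    ring
  calc ∑' (i : I), ∫⁻ y in (T i).2, ‖f y - f (T i).1‖₊ ∂μ
      = ∑' i, I.indicator (fun i => ∫⁻ y in (T i).2, ‖f y - f (T i).1‖₊ ∂μ) i :=
        tsum_subtype I (fun i => ∫⁻ y in (T i).2, ‖f y - f (T i).1‖₊ ∂μ)
    _ ≤ ∑' (m : ℕ) (i : ℕ),
        (if ⌈‖(T i).1‖⌉₊ = m ∧ i ∈ I then ENNReal.ofReal (c m) * μ (T i).2 else 0) :=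
        step2 ▸ step1
    _ ≤ ∑' (m : ℕ), ENNReal.ofReal (ε / 2^(m+2)) := ENNReal.tsum_le_tsum step3
    _ = ENNReal.ofReal (ε/2) := hgeo
    _ < ENNReal.ofReal ε := by
        rw [ENNReal.ofReal_lt_ofReal_iff hε]
        linarith
end

section
/- Let Y be a Banach space and f : X → Y μ-measurable with ‖f‖ μ-integrable on X, fix ε > 0, λ ≥ 1, and a μ-a.e. λ-Morse cover 𝒮 of X. Let Ω be an open ball about the origin large enough that ∫_{X\Ω} ‖f‖ dμ < ε. Then there is a gauge function δ : Ω → (0,1] such that for every countably infinite sequence ⟨S_i(x_i)⟩ of δ-fine sets from 𝒮, each contained in Ω, that is μ-exhausting of Ω, there exists m ∈ ℕ such that for all n ≥ m: ‖∫_X f dμ − Σ_{i=1}^n f(x_i)·μ(S_i)‖ ≤ ∫_X ‖f(y) − Σ_{i=1}^n f(x_i)χ_{S_i}(y)‖ dμ(y) < 3ε, where ∫_X f dμ is the Bochner integral of f. -/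
open MeasureTheory Set Metric Filter
open scoped ENNReal NNReal Topology
set_option maxHeartbeats 1000000

/-- Let `Y` be a Banach space, `f : X → Y` `μ`-measurable with `‖f‖` `μ`-integrable,
`ε > 0`, `λ ≥ 1`, and `𝒮` a `μ`-a.e. `λ`-Morse cover of `X`.  Let `Ω` be an open ball
about the origin large enough that `∫_{X \ Ω} ‖f‖ dμ < ε`.  Then there is a gauge
`δ : Ω → (0,1]` such that for every countably infinite sequence `⟨S_i(x_i)⟩` of
`δ`-fine sets from `𝒮`, each contained in `Ω`, that is `μ`-exhausting of `Ω`, there is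
`m ∈ ℕ` such that for all `n ≥ m`,
`‖∫_X f dμ − Σ_{i<n} f(x_i)·μ(S_i)‖ ≤ ∫_X ‖f(y) − Σ_{i<n} f(x_i)χ_{S_i}(y)‖ dμ(y) < 3ε`. -/
theorem bochner_integral_morse_riemann_sums
    {X Y : Type*} [NormedAddCommGroup X] [NormedSpace ℝ X] [FiniteDimensional ℝ X]
    [MeasurableSpace X] [OpensMeasurableSpace X]
    [NormedAddCommGroup Y] [NormedSpace ℝ Y] [CompleteSpace Y]
    (μ : Measure X) [μ.Regular] [μ.IsComplete]
    (f : X → Y) (hf : MuMeasurable μ f)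
    (hint : Integrable (fun x => ‖f x‖) μ)
    (ε : ℝ) (hε : 0 < ε)
    (lam : ℝ) (hlam : 1 ≤ lam)
    (𝒮 : Set (X × Set X)) (h𝒮 : IsAEMorseCover μ lam Set.univ 𝒮)
    (ρ : ℝ) (hρ : 0 < ρ) (Ω : Set X) (hΩ : Ω = Metric.ball (0:X) ρ)
    (htail : ∫⁻ y in Ωᶜ, ‖f y‖₊ ∂μ < ENNReal.ofReal ε) :
    ∃ δ : X → ℝ, (∀ x ∈ Ω, δ x ∈ Set.Ioc (0:ℝ) 1) ∧
      ∀ T : ℕ → X × Set X,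
        (∀ i : ℕ, T i ∈ 𝒮 ∧ (T i).2 ⊆ Ω ∧
          (T i).2 ⊆ Metric.closedBall (T i).1 (δ (T i).1)) →
        (∀ i j : ℕ, i ≠ j → Disjoint (T i).2 (T j).2) →
        μ (Ω \ ⋃ i : ℕ, (T i).2) = 0 →
        ∃ m : ℕ, ∀ n ≥ m,
          ‖(∫ y, f y ∂μ) - ∑ i ∈ Finset.range n, (μ (T i).2).toReal • f (T i).1‖
            ≤ (∫ y, ‖f y - ∑ i ∈ Finset.range n,
                Set.indicator (T i).2 (fun _ => f (T i).1) y‖ ∂μ) ∧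
          (∫ y, ‖f y - ∑ i ∈ Finset.range n,
                Set.indicator (T i).2 (fun _ => f (T i).1) y‖ ∂μ) < 3 * ε := by
  classical
  -- measurability and integrability of `f`
  have haesm : AEStronglyMeasurable f μ := by
    obtain ⟨F, hF⟩ := hf
    exact aestronglyMeasurable_of_tendsto_ae atTop
      (fun n => (F n).stronglyMeasurable.aestronglyMeasurable) hF
  have hfi : Integrable f μ := ⟨haesm, (hasFiniteIntegral_norm_iff f).1 hint.2⟩
  -- basic facts about `Ω`
  have hΩopen : IsOpen Ω := by rw [hΩ]; exact isOpen_ball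
  have hΩm : MeasurableSet Ω := hΩopen.measurableSet
  have hΩfin : μ Ω < ⊤ := by
    refine lt_of_le_of_lt (measure_mono ?_) (isCompact_closedBall (0:X) ρ).measure_lt_top
    rw [hΩ]; exact ball_subset_closedBall
  set M : ℝ := (μ Ω).toReal + 1 with hM
  have hM0 : 0 < M := by positivity
  have hμΩM : μ Ω ≤ ENNReal.ofReal M := by
    rw [← ENNReal.ofReal_toReal hΩfin.ne]
    exact ENNReal.ofReal_le_ofReal (by simp [hM])
  set η : ℝ := ε / (16 * M) with hηdef
  have hη : 0 < η := by positivity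
  have hηM : η * M = ε / 16 := by
    rw [hηdef]; field_simp
  -- a simple function `g` close to `f` in `L¹`
  set θ : ℝ := min (ε / 16) (η * (ε / 16)) with hθdef
  have hθ : 0 < θ := lt_min (by positivity) (by positivity)
  obtain ⟨g, hgθ, hgmem⟩ :=
    (memLp_one_iff_integrable.2 hfi).exists_simpleFunc_eLpNorm_sub_lt ENNReal.one_ne_top
      (show (ENNReal.ofReal θ) ≠ 0 by simp [ENNReal.ofReal_eq_zero, not_le, hθ])
  have hfg : ∫⁻ z, ‖f z - g z‖₊ ∂μ < ENNReal.ofReal θ := by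
    have := hgθ
    rw [eLpNorm_one_eq_lintegral_enorm] at this
    simpa [enorm_eq_nnnorm] using this
  -- a strongly measurable version `f'` of `f`
  set f' : X → Y := haesm.mk f with hf'def
  have hf'sm : StronglyMeasurable f' := haesm.stronglyMeasurable_mk
  have hff' : f =ᵐ[μ] f' := haesm.ae_eq_mk
  obtain ⟨N₀, hN₀sub, hN₀m, hN₀0⟩ : ∃ N, {z | f z ≠ f' z} ⊆ N ∧ MeasurableSet N ∧ μ N = 0 :=
    exists_measurable_superset_of_null (ae_iff.1 hff')
  have hf'g : ∫⁻ z, ‖f' z - g z‖₊ ∂μ < ENNReal.ofReal θ := by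
    have hcongr : (fun z => (‖f z - g z‖₊ : ℝ≥0∞)) =ᵐ[μ] fun z => (‖f' z - g z‖₊ : ℝ≥0∞) :=
      hff'.mono fun z hz => by simp only [hz]
    rwa [← lintegral_congr_ae hcongr]
  have hfin' : ∫⁻ z, ‖f' z‖₊ ∂μ < ⊤ := by
    have hcongr : (fun z => (‖f z‖₊ : ℝ≥0∞)) =ᵐ[μ] fun z => (‖f' z‖₊ : ℝ≥0∞) :=
      hff'.mono fun z hz => by simp only [hz]
    rw [← lintegral_congr_ae hcongr]; exact hfi.2
  -- bound on values of `g`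
  set c0 : ℝ := 2 * ((g.range.sup fun y => ‖y‖₊ : ℝ≥0) : ℝ) with hc0def
  have hc00 : 0 ≤ c0 := by positivity
  have hgb : ∀ y z : X, ‖g y - g z‖ ≤ c0 := by
    intro y z
    have h1 : ∀ w : X, ‖g w‖ ≤ ((g.range.sup fun y => ‖y‖₊ : ℝ≥0) : ℝ) := by
      intro w
      have := Finset.le_sup (f := fun y => ‖y‖₊) (g.mem_range_self w)
      exact_mod_cast this
    calc ‖g y - g z‖ ≤ ‖g y‖ + ‖g z‖ := norm_sub_le _ _
      _ ≤ _ + _ := add_le_add (h1 y) (h1 z)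
      _ = c0 := by rw [hc0def]; ring
  set nC : ℝ := (g.range.card : ℝ) with hnCdef
  have hnC0 : 0 ≤ nC := by positivity
  set κ : ℝ := ε / (16 * (c0 + 1) * (nC + 1)) with hκdef
  have hκ : 0 < κ := by positivity
  -- open sets around the fibers of `g` (within `Ω`)
  have hfib : ∀ c : Y, ∃ Vc : Set X, IsOpen Vc ∧ (⇑g ⁻¹' {c} ∩ Ω ⊆ Vc) ∧
      μ (Vc \ (⇑g ⁻¹' {c} ∩ Ω)) ≤ ENNReal.ofReal κ := by
    intro c
    have hAm : MeasurableSet (⇑g ⁻¹' {c} ∩ Ω) := (g.measurableSet_fiber c).inter hΩm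
    have hAfin : μ (⇑g ⁻¹' {c} ∩ Ω) < ⊤ :=
      lt_of_le_of_lt (measure_mono inter_subset_right) hΩfin
    obtain ⟨W, hsub, hopen, hW⟩ := Set.exists_isOpen_lt_of_lt _
      (μ (⇑g ⁻¹' {c} ∩ Ω) + ENNReal.ofReal κ)
      (ENNReal.lt_add_right hAfin.ne (by simp [ENNReal.ofReal_eq_zero, not_le, hκ]))
    refine ⟨W, hopen, hsub, ?_⟩
    have h1 : μ (W ∩ (⇑g ⁻¹' {c} ∩ Ω)) + μ (W \ (⇑g ⁻¹' {c} ∩ Ω)) = μ W :=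
      measure_inter_add_diff W hAm
    have h2 : W ∩ (⇑g ⁻¹' {c} ∩ Ω) = ⇑g ⁻¹' {c} ∩ Ω := inter_eq_self_of_subset_right hsub
    rw [h2] at h1
    rw [← h1] at hW
    exact le_of_lt ((ENNReal.add_lt_add_iff_left hAfin.ne).1 hW)
  choose V hVopen hVsub hVsmall using hfib
  -- level sets of `‖f' - g‖` and open sets around them
  set h' : X → ℝ := fun z => ‖f' z - g z‖ with hh'def
  have hh'm : Measurable h' := (hf'sm.sub g.stronglyMeasurable).norm.measurable
  set E' : ℕ → Set X := fun k => Ω ∩ h' ⁻¹' (Ico (η + k) (η + (k + 1))) with hE'def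
  have hE'm : ∀ k, MeasurableSet (E' k) := fun k => hΩm.inter (hh'm measurableSet_Ico)
  have hE'disj : Pairwise (Function.onFun Disjoint E') := by
    intro k l hkl
    refine Set.disjoint_left.2 ?_
    rintro z ⟨-, hz1⟩ ⟨-, hz2⟩
    simp only [mem_preimage, mem_Ico] at hz1 hz2
    rcases lt_or_gt_of_ne hkl with h | h
    · have : (k : ℝ) + 1 ≤ l := by exact_mod_cast h
      linarith [hz1.2, hz2.1]
    · have : (l : ℝ) + 1 ≤ k := by exact_mod_cast h
      linarith [hz1.1, hz2.2]
  set ck : ℕ → ℝ := fun k => ε * (1/2) ^ k / (16 * (η + k + 1)) with hckdef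
  have hηk1 : ∀ k : ℕ, (0:ℝ) < η + k + 1 := by
    intro k
    have : (0:ℝ) ≤ k := Nat.cast_nonneg k
    linarith
  have hck : ∀ k, 0 < ck k := by
    intro k
    exact div_pos (by positivity) (by nlinarith [hηk1 k])
  have hVk : ∀ k : ℕ, ∃ W, IsOpen W ∧ E' k ∪ N₀ ⊆ W ∧
      μ W ≤ μ (E' k) + ENNReal.ofReal (ck k) := by
    intro k
    have hE'fin : μ (E' k) < ⊤ :=
      lt_of_le_of_lt (measure_mono inter_subset_left) hΩfin
    have hle : μ (E' k ∪ N₀) ≤ μ (E' k) := by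
      refine le_trans (measure_union_le _ _) ?_
      rw [hN₀0, add_zero]
    have hlt : μ (E' k ∪ N₀) < μ (E' k) + ENNReal.ofReal (ck k) :=
      lt_of_le_of_lt hle
        (ENNReal.lt_add_right hE'fin.ne (by simp [ENNReal.ofReal_eq_zero, not_le, hck k]))
    obtain ⟨W, hsub, hopen, hW⟩ := Set.exists_isOpen_lt_of_lt _ _ hlt
    exact ⟨W, hopen, hsub, hW.le⟩
  choose V' hV'open hV'sub hV'small using hVk
  -- the gauge
  have hgauge : ∀ x, x ∈ Ω → ∃ t : ℝ, (0 < t ∧ t ≤ 1) ∧ closedBall x t ⊆ V (g x) ∧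
      (η ≤ ‖f x - g x‖ → closedBall x t ⊆ V' ⌊‖f x - g x‖ - η⌋₊) := by
    intro x hx
    have hx1 : x ∈ V (g x) := hVsub (g x) ⟨rfl, hx⟩
    obtain ⟨r1, hr1, hball1⟩ := Metric.isOpen_iff.1 (hVopen (g x)) x hx1
    by_cases hb : η ≤ ‖f x - g x‖
    · have hx2 : x ∈ V' ⌊‖f x - g x‖ - η⌋₊ := by
        apply hV'sub ⌊‖f x - g x‖ - η⌋₊
        by_cases hN : x ∈ N₀
        · exact Or.inr hN
        · left
          have hfx : f x = f' x := by
            by_contra h; exact hN (hN₀sub h)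
          refine ⟨hx, ?_⟩
          simp only [mem_preimage, mem_Ico]
          have hval : h' x = ‖f x - g x‖ := by rw [hh'def]; simp [← hfx]
          constructor
          · rw [hval]
            have := Nat.floor_le (sub_nonneg.2 hb)
            linarith
          · rw [hval]
            have := Nat.lt_floor_add_one (‖f x - g x‖ - η)
            push_cast
            linarith
      obtain ⟨r2, hr2, hball2⟩ :=
        Metric.isOpen_iff.1 (hV'open ⌊‖f x - g x‖ - η⌋₊) x hx2
      refine ⟨min 1 (min r1 r2) / 2, ⟨by positivity, ?_⟩, ?_, fun _ => ?_⟩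
      · have : min 1 (min r1 r2) ≤ 1 := min_le_left _ _
        linarith
      · refine subset_trans (closedBall_subset_ball (show min 1 (min r1 r2) / 2 < r1 from ?_)) hball1
        have h1 : min 1 (min r1 r2) ≤ r1 := le_trans (min_le_right _ _) (min_le_left _ _)
        have h2 : 0 < min 1 (min r1 r2) := by positivity
        linarith
      · refine subset_trans (closedBall_subset_ball (show min 1 (min r1 r2) / 2 < r2 from ?_)) hball2
        have h1 : min 1 (min r1 r2) ≤ r2 := le_trans (min_le_right _ _) (min_le_right _ _)
        have h2 : 0 < min 1 (min r1 r2) := by positivity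
        linarith
    · refine ⟨min 1 r1 / 2, ⟨by positivity, ?_⟩, ?_, fun hb' => absurd hb' hb⟩
      · have : min 1 r1 ≤ 1 := min_le_left _ _
        linarith
      · refine subset_trans (closedBall_subset_ball (show min 1 r1 / 2 < r1 from ?_)) hball1
        have h1 : min 1 r1 ≤ r1 := min_le_right _ _
        have h2 : 0 < min 1 r1 := by positivity
        linarith
  choose! δ hδprop using hgauge
  have hδ01 : ∀ x ∈ Ω, 0 < δ x ∧ δ x ≤ 1 := fun x hx => (hδprop x hx).1
  have hδV : ∀ x ∈ Ω, closedBall x (δ x) ⊆ V (g x) := fun x hx => (hδprop x hx).2.1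
  have hδV' : ∀ x ∈ Ω, η ≤ ‖f x - g x‖ →
      closedBall x (δ x) ⊆ V' ⌊‖f x - g x‖ - η⌋₊ := fun x hx => (hδprop x hx).2.2
  refine ⟨δ, fun x hx => ⟨(hδ01 x hx).1, (hδ01 x hx).2⟩, ?_⟩
  intro T hT hdisj hnull
  set x : ℕ → X := fun i => (T i).1 with hxdef
  set S : ℕ → Set X := fun i => (T i).2 with hSdef
  have hSm : ∀ i, MeasurableSet (S i) := fun i => (h𝒮.1.1 (T i) (hT i).1).2.1
  have hSΩ : ∀ i, S i ⊆ Ω := fun i => (hT i).2.1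
  have hxS : ∀ i, x i ∈ S i := by
    intro i
    obtain ⟨r, hr, hball, -, -⟩ := (h𝒮.1.1 (T i) (hT i).1).1
    exact hball (mem_closedBall_self hr.le)
  have hxΩ : ∀ i, x i ∈ Ω := fun i => hSΩ i (hxS i)
  have hfine : ∀ i, S i ⊆ closedBall (x i) (δ (x i)) := fun i => (hT i).2.2
  have hSV : ∀ i, S i ⊆ V (g (x i)) := fun i => (hfine i).trans (hδV _ (hxΩ i))
  have hdisj' : Pairwise (Function.onFun Disjoint S) := fun i j h => hdisj i j h
  have hSfin : ∀ i, μ (S i) < ⊤ := fun i => lt_of_le_of_lt (measure_mono (hSΩ i)) hΩfin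
  -- choice of `m` via the tail of the series `∑ ∫_{S i} ‖f'‖`
  set a : ℕ → ℝ≥0∞ := fun i => ∫⁻ z in S i, ‖f' z‖₊ ∂μ with hadef
  have hatot : ∑' i, a i ≠ ⊤ := by
    have h1 : ∑' i, a i = ∫⁻ z in ⋃ i, S i, ‖f' z‖₊ ∂μ :=
      (lintegral_iUnion hSm hdisj' _).symm
    rw [h1]
    exact ne_of_lt (lt_of_le_of_lt (setLIntegral_le_lintegral _ _) hfin')
  have htend := (ENNReal.tendsto_sum_nat_add a hatot).eventually_lt_const
    (show (0:ℝ≥0∞) < ENNReal.ofReal ε by simp [hε])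
  obtain ⟨m, hm⟩ := eventually_atTop.1 htend
  refine ⟨m, fun n hn => ?_⟩
  set Un : Set X := ⋃ i ∈ Finset.range n, S i with hUndef
  have hUnm : MeasurableSet Un := (Finset.range n).measurableSet_biUnion (fun i _ => hSm i)
  set sfun : X → Y := fun y => ∑ i ∈ Finset.range n, (S i).indicator (fun _ => f (x i)) y
    with hsfundef
  -- the second tail estimate
  have htail2 : ∫⁻ z in Ω \ Un, ‖f' z‖₊ ∂μ < ENNReal.ofReal ε := by
    have hsub : Ω \ Un ⊆ (Ω \ ⋃ i, S i) ∪ ⋃ k, S (k + m) := by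
      intro z hz
      by_cases hzU : z ∈ ⋃ i, S i
      · obtain ⟨j, hj⟩ := mem_iUnion.1 hzU
        have hjm : m ≤ j := by
          by_contra hjm
          push_neg at hjm
          exact hz.2 (mem_biUnion (Finset.mem_range.2 (lt_of_lt_of_le hjm hn)) hj)
        right
        exact mem_iUnion.2 ⟨j - m, by rwa [Nat.sub_add_cancel hjm]⟩
      · exact Or.inl ⟨hz.1, hzU⟩
    calc ∫⁻ z in Ω \ Un, ‖f' z‖₊ ∂μ
        ≤ ∫⁻ z in (Ω \ ⋃ i, S i) ∪ ⋃ k, S (k + m), ‖f' z‖₊ ∂μ := lintegral_mono_set hsub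
      _ ≤ (∫⁻ z in Ω \ ⋃ i, S i, ‖f' z‖₊ ∂μ) + ∫⁻ z in ⋃ k, S (k + m), ‖f' z‖₊ ∂μ :=
          lintegral_union_le _ _ _
      _ = ∫⁻ z in ⋃ k, S (k + m), ‖f' z‖₊ ∂μ := by
          rw [setLIntegral_measure_zero _ _ hnull, zero_add]
      _ ≤ ∑' k : ℕ, ∫⁻ z in S (k + m), ‖f' z‖₊ ∂μ := lintegral_iUnion_le _ _
      _ < ENNReal.ofReal ε := hm m le_rfl
  -- pointwise identification of `sfun` on each `S i` and off `Un`
  have hsfun_mem : ∀ i ∈ Finset.range n, ∀ y ∈ S i, sfun y = f (x i) := by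
    intro i hi y hy
    simp only [hsfundef]
    rw [Finset.sum_eq_single i]
    · exact indicator_of_mem hy _
    · intro j hj hne
      refine indicator_of_notMem (fun hyS => ?_) _
      exact Set.disjoint_left.1 (hdisj' hne) hyS hy
    · intro h; exact absurd hi h
  have hsfun_zero : ∀ y, y ∉ Un → sfun y = 0 := by
    intro y hy
    simp only [hsfundef]
    refine Finset.sum_eq_zero fun i hi => ?_
    exact indicator_of_notMem (fun hyS => hy (mem_biUnion hi hyS)) _
  -- the main lintegral estimate
  have key : ∫⁻ y, ‖f y - sfun y‖₊ ∂μ < ENNReal.ofReal (3 * ε) := by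
    have hcongr : ∫⁻ y, ‖f y - sfun y‖₊ ∂μ = ∫⁻ y, ‖f' y - sfun y‖₊ ∂μ :=
      lintegral_congr_ae (hff'.mono fun y hy => by simp only [hy])
    rw [hcongr, ← lintegral_add_compl (fun y => (‖f' y - sfun y‖₊ : ℝ≥0∞)) hUnm]
    -- complement part
    have hcompl : ∫⁻ y in Unᶜ, ‖f' y - sfun y‖₊ ∂μ <
        ENNReal.ofReal ε + ENNReal.ofReal ε := by
      have h0 : ∫⁻ y in Unᶜ, ‖f' y - sfun y‖₊ ∂μ = ∫⁻ y in Unᶜ, ‖f' y‖₊ ∂μ := by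
        refine setLIntegral_congr_fun_ae hUnm.compl (Eventually.of_forall fun y hy => ?_)
        rw [hsfun_zero y hy, sub_zero]
      rw [h0]
      have hsub : Unᶜ ⊆ Ωᶜ ∪ (Ω \ Un) := by
        intro y hy
        by_cases hyΩ : y ∈ Ω
        · exact Or.inr ⟨hyΩ, hy⟩
        · exact Or.inl hyΩ
      have htailΩ : ∫⁻ z in Ωᶜ, ‖f' z‖₊ ∂μ < ENNReal.ofReal ε := by
        have hcongr2 : ∫⁻ z in Ωᶜ, ‖f' z‖₊ ∂μ = ∫⁻ z in Ωᶜ, ‖f z‖₊ ∂μ := by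
          refine lintegral_congr_ae (ae_restrict_of_ae ?_)
          exact hff'.mono fun z hz => by simp only [hz]
        rwa [hcongr2]
      calc ∫⁻ y in Unᶜ, ‖f' y‖₊ ∂μ
          ≤ ∫⁻ y in Ωᶜ ∪ (Ω \ Un), ‖f' y‖₊ ∂μ := lintegral_mono_set hsub
        _ ≤ (∫⁻ y in Ωᶜ, ‖f' y‖₊ ∂μ) + ∫⁻ y in Ω \ Un, ‖f' y‖₊ ∂μ := lintegral_union_le _ _ _
        _ < ENNReal.ofReal ε + ENNReal.ofReal ε := ENNReal.add_lt_add htailΩ htail2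
    -- main part on `Un`
    have hUnpart : ∫⁻ y in Un, ‖f' y - sfun y‖₊ ∂μ ≤ ENNReal.ofReal ε := by
      set W : Y → Set X := fun c => V c \ (⇑g ⁻¹' {c} ∩ Ω) with hWdef
      have hWm : ∀ c, MeasurableSet (W c) :=
        fun c => (hVopen c).measurableSet.diff ((g.measurableSet_fiber c).inter hΩm)
      have hWsmall : ∀ c, μ (W c) ≤ ENNReal.ofReal κ := fun c => hVsmall c
      have hsplit : ∫⁻ y in Un, ‖f' y - sfun y‖₊ ∂μ
          = ∑ i ∈ Finset.range n, ∫⁻ y in S i, ‖f' y - sfun y‖₊ ∂μ := by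
        rw [hUndef]
        exact lintegral_biUnion_finset (fun i _ j _ hij => hdisj' hij) (fun i _ => hSm i) _
      have hper : ∀ i ∈ Finset.range n, ∫⁻ y in S i, ‖f' y - sfun y‖₊ ∂μ
          = ∫⁻ y in S i, ‖f' y - f (x i)‖₊ ∂μ := by
        intro i hi
        refine setLIntegral_congr_fun_ae (hSm i) (Eventually.of_forall fun y hy => ?_)
        rw [hsfun_mem i hi y hy]
      have hmeas1 : Measurable fun y => ((‖f' y - g y‖₊ : ℝ≥0∞)) :=
        (hf'sm.sub g.stronglyMeasurable).enorm
      have htri : ∀ i, ∫⁻ y in S i, ‖f' y - f (x i)‖₊ ∂μ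
          ≤ ((∫⁻ y in S i, ‖f' y - g y‖₊ ∂μ) + ∫⁻ y in S i, ‖g y - g (x i)‖₊ ∂μ)
            + (‖g (x i) - f (x i)‖₊ : ℝ≥0∞) * μ (S i) := by
        intro i
        have hmono : ∀ y, (‖f' y - f (x i)‖₊ : ℝ≥0∞)
            ≤ ((‖f' y - g y‖₊ : ℝ≥0∞) + (‖g y - g (x i)‖₊ : ℝ≥0∞))
              + (‖g (x i) - f (x i)‖₊ : ℝ≥0∞) := by
          intro y
          have h1 : f' y - f (x i) = ((f' y - g y) + (g y - g (x i))) + (g (x i) - f (x i)) := by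
            abel
          have h2 : ‖f' y - f (x i)‖₊ ≤ (‖f' y - g y‖₊ + ‖g y - g (x i)‖₊) + ‖g (x i) - f (x i)‖₊ := by
            rw [h1]
            exact le_trans (nnnorm_add_le _ _) (add_le_add_left (nnnorm_add_le _ _) _)
          exact_mod_cast h2
        calc ∫⁻ y in S i, ‖f' y - f (x i)‖₊ ∂μ
            ≤ ∫⁻ y in S i, (((‖f' y - g y‖₊ : ℝ≥0∞) + (‖g y - g (x i)‖₊ : ℝ≥0∞))
                + (‖g (x i) - f (x i)‖₊ : ℝ≥0∞)) ∂μ := lintegral_mono fun y => hmono y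
          _ = (∫⁻ y in S i, ((‖f' y - g y‖₊ : ℝ≥0∞) + (‖g y - g (x i)‖₊ : ℝ≥0∞)) ∂μ)
              + ∫⁻ _ in S i, (‖g (x i) - f (x i)‖₊ : ℝ≥0∞) ∂μ :=
            lintegral_add_right _ measurable_const
          _ = ((∫⁻ y in S i, ‖f' y - g y‖₊ ∂μ) + ∫⁻ y in S i, ‖g y - g (x i)‖₊ ∂μ)
              + (‖g (x i) - f (x i)‖₊ : ℝ≥0∞) * μ (S i) := by
            rw [lintegral_add_left hmeas1, setLIntegral_const]
      -- Bound A : the `f' - g` part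
      have hA : ∑ i ∈ Finset.range n, ∫⁻ y in S i, ‖f' y - g y‖₊ ∂μ
          ≤ ENNReal.ofReal (ε / 16) := by
        calc ∑ i ∈ Finset.range n, ∫⁻ y in S i, ‖f' y - g y‖₊ ∂μ
            ≤ ∑' i, ∫⁻ y in S i, ‖f' y - g y‖₊ ∂μ := ENNReal.sum_le_tsum _
          _ = ∫⁻ y in ⋃ i, S i, ‖f' y - g y‖₊ ∂μ := (lintegral_iUnion hSm hdisj' _).symm
          _ ≤ ∫⁻ y, ‖f' y - g y‖₊ ∂μ := setLIntegral_le_lintegral _ _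
          _ ≤ ENNReal.ofReal θ := hf'g.le
          _ ≤ ENNReal.ofReal (ε / 16) := ENNReal.ofReal_le_ofReal (min_le_left _ _)
      -- Bound B : the `g y - g (x i)` part
      have hBi : ∀ i, ∫⁻ y in S i, ‖g y - g (x i)‖₊ ∂μ
          ≤ ENNReal.ofReal c0 * μ (S i ∩ W (g (x i))) := by
        intro i
        have hPm : MeasurableSet (⇑g ⁻¹' {g (x i)}) := g.measurableSet_fiber _
        have hsplit2 : S i = (S i ∩ ⇑g ⁻¹' {g (x i)}) ∪ (S i \ ⇑g ⁻¹' {g (x i)}) :=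
          (inter_union_diff _ _).symm
        have hd2 : Disjoint (S i ∩ ⇑g ⁻¹' {g (x i)}) (S i \ ⇑g ⁻¹' {g (x i)}) :=
          Disjoint.mono_left inter_subset_right disjoint_sdiff_right
        have hBmeas : MeasurableSet (S i \ ⇑g ⁻¹' {g (x i)}) := (hSm i).diff hPm
        have hzero : ∫⁻ y in S i ∩ ⇑g ⁻¹' {g (x i)}, ‖g y - g (x i)‖₊ ∂μ = 0 := by
          have heq0 : ∫⁻ y in S i ∩ ⇑g ⁻¹' {g (x i)}, ‖g y - g (x i)‖₊ ∂μ
              = ∫⁻ _ in S i ∩ ⇑g ⁻¹' {g (x i)}, (0:ℝ≥0∞) ∂μ := by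
            refine setLIntegral_congr_fun_ae ((hSm i).inter hPm)
              (Eventually.of_forall fun y hy => ?_)
            have hgy : g y = g (x i) := hy.2
            simp [hgy]
          rw [heq0, lintegral_zero]
        have hrest : ∫⁻ y in S i \ ⇑g ⁻¹' {g (x i)}, ‖g y - g (x i)‖₊ ∂μ
            ≤ ENNReal.ofReal c0 * μ (S i ∩ W (g (x i))) := by
          have hbd : ∫⁻ y in S i \ ⇑g ⁻¹' {g (x i)}, ‖g y - g (x i)‖₊ ∂μ
              ≤ ∫⁻ _ in S i \ ⇑g ⁻¹' {g (x i)}, ENNReal.ofReal c0 ∂μ := by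
            refine lintegral_mono fun y => ?_
            rw [← enorm_eq_nnnorm, ← ofReal_norm]
            exact ENNReal.ofReal_le_ofReal (hgb _ _)
          refine le_trans hbd ?_
          rw [setLIntegral_const]
          refine mul_le_mul_right (measure_mono fun y hy => ?_) _
          exact ⟨hy.1, hSV i hy.1, fun hc => hy.2 hc.1⟩
        calc ∫⁻ y in S i, ‖g y - g (x i)‖₊ ∂μ
            = ∫⁻ y in (S i ∩ ⇑g ⁻¹' {g (x i)}) ∪ (S i \ ⇑g ⁻¹' {g (x i)}),
              ‖g y - g (x i)‖₊ ∂μ := by rw [← hsplit2]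
          _ = (∫⁻ y in S i ∩ ⇑g ⁻¹' {g (x i)}, ‖g y - g (x i)‖₊ ∂μ)
              + ∫⁻ y in S i \ ⇑g ⁻¹' {g (x i)}, ‖g y - g (x i)‖₊ ∂μ :=
            lintegral_union hBmeas hd2
          _ ≤ ENNReal.ofReal c0 * μ (S i ∩ W (g (x i))) := by rw [hzero, zero_add]; exact hrest
      have hgroup : ∑ i ∈ Finset.range n, μ (S i ∩ W (g (x i))) ≤ ∑ c ∈ g.range, μ (W c) := by
        have hrw : ∀ i ∈ Finset.range n, μ (S i ∩ W (g (x i)))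
            = ∑ c ∈ g.range, if g (x i) = c then μ (S i ∩ W c) else 0 := by
          intro i _
          rw [Finset.sum_ite_eq g.range (g (x i)) (fun c => μ (S i ∩ W c))]
          simp [SimpleFunc.mem_range_self]
        rw [Finset.sum_congr rfl hrw, Finset.sum_comm]
        refine Finset.sum_le_sum fun c _ => ?_
        have hDm : ∀ i, MeasurableSet (if g (x i) = c then S i ∩ W c else ∅) := by
          intro i; split
          · exact (hSm i).inter (hWm c)
          · exact MeasurableSet.empty
        have hDsub : ∀ i, (if g (x i) = c then S i ∩ W c else ∅) ⊆ S i := by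
          intro i; split
          · exact inter_subset_left
          · exact empty_subset _
        have hDd : Pairwise (Function.onFun Disjoint fun i => if g (x i) = c then S i ∩ W c else ∅) :=
          fun i j hij => Disjoint.mono (hDsub i) (hDsub j) (hdisj' hij)
        calc ∑ i ∈ Finset.range n, (if g (x i) = c then μ (S i ∩ W c) else 0)
            = ∑ i ∈ Finset.range n, μ (if g (x i) = c then S i ∩ W c else ∅) := by
              refine Finset.sum_congr rfl fun i _ => ?_
              split <;> simp
          _ ≤ ∑' i, μ (if g (x i) = c then S i ∩ W c else ∅) := ENNReal.sum_le_tsum _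
          _ = μ (⋃ i, if g (x i) = c then S i ∩ W c else ∅) := (measure_iUnion hDd hDm).symm
          _ ≤ μ (W c) := measure_mono (iUnion_subset fun i => by
              split
              · exact inter_subset_right
              · exact empty_subset _)
      have hB : ∑ i ∈ Finset.range n, ∫⁻ y in S i, ‖g y - g (x i)‖₊ ∂μ
          ≤ ENNReal.ofReal (ε / 16) := by
        have hreal : c0 * (nC * κ) ≤ ε / 16 := by
          have hD : (0:ℝ) < 16 * (c0 + 1) * (nC + 1) :=
            mul_pos (mul_pos (by norm_num) (by linarith)) (by linarith)
          rw [hκdef]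
          rw [show c0 * (nC * (ε / (16 * (c0 + 1) * (nC + 1))))
              = c0 * nC * ε / (16 * (c0 + 1) * (nC + 1)) by ring]
          rw [div_le_div_iff₀ hD (by norm_num : (0:ℝ) < 16)]
          nlinarith [mul_nonneg hc00 hnC0, mul_nonneg (mul_nonneg hc00 hnC0) hε.le]
        calc ∑ i ∈ Finset.range n, ∫⁻ y in S i, ‖g y - g (x i)‖₊ ∂μ
            ≤ ∑ i ∈ Finset.range n, ENNReal.ofReal c0 * μ (S i ∩ W (g (x i))) :=
              Finset.sum_le_sum fun i _ => hBi i
          _ = ENNReal.ofReal c0 * ∑ i ∈ Finset.range n, μ (S i ∩ W (g (x i))) := by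
              rw [Finset.mul_sum]
          _ ≤ ENNReal.ofReal c0 * ∑ c ∈ g.range, μ (W c) := mul_le_mul_right hgroup _
          _ ≤ ENNReal.ofReal c0 * ∑ _c ∈ g.range, ENNReal.ofReal κ :=
              mul_le_mul_right (Finset.sum_le_sum fun c _ => hWsmall c) _
          _ = ENNReal.ofReal c0 * (g.range.card * ENNReal.ofReal κ) := by
              rw [Finset.sum_const, nsmul_eq_mul]
          _ = ENNReal.ofReal c0 * (ENNReal.ofReal nC * ENNReal.ofReal κ) := by
              rw [hnCdef, ENNReal.ofReal_natCast]
          _ = ENNReal.ofReal (c0 * (nC * κ)) := by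
              rw [ENNReal.ofReal_mul hc00, ENNReal.ofReal_mul hnC0]
          _ ≤ ENNReal.ofReal (ε / 16) := ENNReal.ofReal_le_ofReal hreal
      -- Bound C : the tag error part
      have hCi : ∀ i, (‖g (x i) - f (x i)‖₊ : ℝ≥0∞) * μ (S i)
          ≤ ENNReal.ofReal η * μ (S i)
            + ∑' k : ℕ, (if η ≤ ‖f (x i) - g (x i)‖ ∧ ⌊‖f (x i) - g (x i)‖ - η⌋₊ = k
                then ENNReal.ofReal (η + k + 1) * μ (S i ∩ V' k) else 0) := by
        intro i
        by_cases hb : η ≤ ‖f (x i) - g (x i)‖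
        · refine le_trans (le_trans ?_ (ENNReal.le_tsum ⌊‖f (x i) - g (x i)‖ - η⌋₊)) le_add_self
          rw [if_pos ⟨hb, rfl⟩]
          have hsub : S i ⊆ V' ⌊‖f (x i) - g (x i)‖ - η⌋₊ :=
            (hfine i).trans (hδV' (x i) (hxΩ i) hb)
          rw [inter_eq_left.2 hsub]
          refine mul_le_mul_left ?_ _
          rw [← enorm_eq_nnnorm, ← ofReal_norm]
          refine ENNReal.ofReal_le_ofReal ?_
          rw [norm_sub_rev]
          have h2 := Nat.lt_floor_add_one (‖f (x i) - g (x i)‖ - η)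
          linarith
        · refine le_trans ?_ le_self_add
          refine mul_le_mul_left ?_ _
          rw [← enorm_eq_nnnorm, ← ofReal_norm]
          refine ENNReal.ofReal_le_ofReal ?_
          rw [norm_sub_rev]
          linarith [not_le.1 hb]
      have hEbound : ∑' k : ℕ, ENNReal.ofReal (η + k + 1) * μ (E' k)
          ≤ ENNReal.ofReal (ε / 16) + ENNReal.ofReal (ε / 16) := by
        have hptk : ∀ k : ℕ, ENNReal.ofReal (η + k + 1) * μ (E' k)
            ≤ ∫⁻ z in E' k, ((‖f' z - g z‖₊ : ℝ≥0∞) + 1) ∂μ := by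
          intro k
          refine le_trans (le_of_eq (setLIntegral_const _ _).symm) ?_
          refine setLIntegral_mono (hmeas1.add measurable_const) ?_
          intro z hz
          obtain ⟨-, hz2⟩ := hz
          simp only [mem_preimage, mem_Ico] at hz2
          have hval : h' z = ‖f' z - g z‖ := rfl
          calc ENNReal.ofReal (η + k + 1) ≤ ENNReal.ofReal (‖f' z - g z‖ + 1) := by
                refine ENNReal.ofReal_le_ofReal ?_
                rw [← hval]
                linarith [hz2.1]
            _ = (‖f' z - g z‖₊ : ℝ≥0∞) + 1 := by
                rw [ENNReal.ofReal_add (norm_nonneg _) zero_le_one,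
                  ofReal_norm, enorm_eq_nnnorm, ENNReal.ofReal_one]
        have hsubB : ∀ k, E' k ⊆ {z | ENNReal.ofReal η ≤ (‖f' z - g z‖₊ : ℝ≥0∞)} := by
          intro k z hz
          obtain ⟨-, hz2⟩ := hz
          simp only [mem_preimage, mem_Ico] at hz2
          have hval : h' z = ‖f' z - g z‖ := rfl
          rw [mem_setOf_eq, ← enorm_eq_nnnorm, ← ofReal_norm]
          refine ENNReal.ofReal_le_ofReal ?_
          have hk0 : (0:ℝ) ≤ k := Nat.cast_nonneg k
          rw [← hval]
          linarith [hz2.1]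
        have hmuB : μ {z | ENNReal.ofReal η ≤ (‖f' z - g z‖₊ : ℝ≥0∞)}
            ≤ ENNReal.ofReal (ε / 16) := by
          have hcheb := meas_ge_le_lintegral_div (μ := μ)
            (f := fun z => (‖f' z - g z‖₊ : ℝ≥0∞)) hmeas1.aemeasurable
            (show ENNReal.ofReal η ≠ 0 by simp [ENNReal.ofReal_eq_zero, not_le, hη])
            ENNReal.ofReal_ne_top
          refine le_trans hcheb ?_
          have hdiv : (∫⁻ z, (‖f' z - g z‖₊ : ℝ≥0∞) ∂μ) / ENNReal.ofReal η
              ≤ ENNReal.ofReal θ / ENNReal.ofReal η :=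
            ENNReal.div_le_div_right hf'g.le _
          refine le_trans hdiv ?_
          rw [← ENNReal.ofReal_div_of_pos hη]
          refine ENNReal.ofReal_le_ofReal ?_
          rw [div_le_iff₀ hη]
          calc θ ≤ η * (ε / 16) := min_le_right _ _
            _ = ε / 16 * η := by ring
        calc ∑' k : ℕ, ENNReal.ofReal (η + k + 1) * μ (E' k)
            ≤ ∑' k : ℕ, ∫⁻ z in E' k, ((‖f' z - g z‖₊ : ℝ≥0∞) + 1) ∂μ := ENNReal.tsum_le_tsum hptk
          _ = ∫⁻ z in ⋃ k, E' k, ((‖f' z - g z‖₊ : ℝ≥0∞) + 1) ∂μ :=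
              (lintegral_iUnion hE'm hE'disj _).symm
          _ ≤ ∫⁻ z in {z | ENNReal.ofReal η ≤ (‖f' z - g z‖₊ : ℝ≥0∞)},
              ((‖f' z - g z‖₊ : ℝ≥0∞) + 1) ∂μ := lintegral_mono_set (iUnion_subset hsubB)
          _ = (∫⁻ z in {z | ENNReal.ofReal η ≤ (‖f' z - g z‖₊ : ℝ≥0∞)},
                (‖f' z - g z‖₊ : ℝ≥0∞) ∂μ)
              + μ {z | ENNReal.ofReal η ≤ (‖f' z - g z‖₊ : ℝ≥0∞)} := by
              rw [lintegral_add_right _ measurable_const, setLIntegral_one]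
          _ ≤ ENNReal.ofReal (ε / 16) + ENNReal.ofReal (ε / 16) := by
              refine add_le_add ?_ hmuB
              refine le_trans (setLIntegral_le_lintegral _ _) ?_
              refine le_trans hf'g.le ?_
              exact ENNReal.ofReal_le_ofReal (min_le_left _ _)
      have hckbound : ∑' k : ℕ, ENNReal.ofReal (η + k + 1) * ENNReal.ofReal (ck k)
          ≤ ENNReal.ofReal (ε / 8) := by
        have hterm : ∀ k : ℕ, ENNReal.ofReal (η + k + 1) * ENNReal.ofReal (ck k)
            = ENNReal.ofReal (ε / 16 * (1/2) ^ k) := by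
          intro k
          rw [← ENNReal.ofReal_mul (hηk1 k).le]
          congr 1
          rw [hckdef]
          field_simp
        have hsummable : Summable fun k : ℕ => ε / 16 * (1/2 : ℝ) ^ k :=
          (summable_geometric_two).mul_left _
        refine le_of_eq ?_
        calc ∑' k : ℕ, ENNReal.ofReal (η + k + 1) * ENNReal.ofReal (ck k)
            = ∑' k : ℕ, ENNReal.ofReal (ε / 16 * (1/2) ^ k) := by
              exact tsum_congr hterm
          _ = ENNReal.ofReal (∑' k : ℕ, ε / 16 * (1/2) ^ k) :=
              (ENNReal.ofReal_tsum_of_nonneg (fun k => by positivity) hsummable).symm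
          _ = ENNReal.ofReal (ε / 8) := by
              rw [tsum_mul_left, tsum_geometric_two]
              congr 1
              ring
      have hC : ∑ i ∈ Finset.range n, (‖g (x i) - f (x i)‖₊ : ℝ≥0∞) * μ (S i)
          ≤ ENNReal.ofReal (ε / 16)
            + (ENNReal.ofReal (ε / 16) + ENNReal.ofReal (ε / 16) + ENNReal.ofReal (ε / 8)) := by
        have hstep1 : ∑ i ∈ Finset.range n, (‖g (x i) - f (x i)‖₊ : ℝ≥0∞) * μ (S i)
            ≤ ∑' i, (ENNReal.ofReal η * μ (S i)
              + ∑' k : ℕ, (if η ≤ ‖f (x i) - g (x i)‖ ∧ ⌊‖f (x i) - g (x i)‖ - η⌋₊ = k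
                  then ENNReal.ofReal (η + k + 1) * μ (S i ∩ V' k) else 0)) :=
          le_trans (Finset.sum_le_sum fun i _ => hCi i) (ENNReal.sum_le_tsum _)
        refine le_trans hstep1 ?_
        rw [ENNReal.tsum_add]
        refine add_le_add ?_ ?_
        · rw [ENNReal.tsum_mul_left]
          calc ENNReal.ofReal η * ∑' i, μ (S i)
              = ENNReal.ofReal η * μ (⋃ i, S i) := by rw [measure_iUnion hdisj' hSm]
            _ ≤ ENNReal.ofReal η * ENNReal.ofReal M :=
                mul_le_mul_right (le_trans (measure_mono (iUnion_subset hSΩ)) hμΩM) _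
            _ = ENNReal.ofReal (η * M) := (ENNReal.ofReal_mul hη.le).symm
            _ = ENNReal.ofReal (ε / 16) := by rw [hηM]
        · rw [ENNReal.tsum_comm]
          have hkbound : ∀ k : ℕ,
              (∑' i, (if η ≤ ‖f (x i) - g (x i)‖ ∧ ⌊‖f (x i) - g (x i)‖ - η⌋₊ = k
                then ENNReal.ofReal (η + k + 1) * μ (S i ∩ V' k) else 0))
              ≤ ENNReal.ofReal (η + k + 1) * μ (V' k) := by
            intro k
            have hrw2 : ∀ i, (if η ≤ ‖f (x i) - g (x i)‖ ∧ ⌊‖f (x i) - g (x i)‖ - η⌋₊ = k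
                then ENNReal.ofReal (η + k + 1) * μ (S i ∩ V' k) else 0)
                = ENNReal.ofReal (η + k + 1)
                  * (if η ≤ ‖f (x i) - g (x i)‖ ∧ ⌊‖f (x i) - g (x i)‖ - η⌋₊ = k
                      then μ (S i ∩ V' k) else 0) := by
              intro i; split <;> simp
            rw [tsum_congr hrw2, ENNReal.tsum_mul_left]
            refine mul_le_mul_right ?_ _
            have hDm : ∀ i, MeasurableSet
                (if η ≤ ‖f (x i) - g (x i)‖ ∧ ⌊‖f (x i) - g (x i)‖ - η⌋₊ = k
                  then S i ∩ V' k else ∅) := by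
              intro i; split
              · exact (hSm i).inter (hV'open k).measurableSet
              · exact MeasurableSet.empty
            have hDsub : ∀ i, (if η ≤ ‖f (x i) - g (x i)‖ ∧ ⌊‖f (x i) - g (x i)‖ - η⌋₊ = k
                then S i ∩ V' k else ∅) ⊆ S i := by
              intro i; split
              · exact inter_subset_left
              · exact empty_subset _
            have hDd : Pairwise (Function.onFun Disjoint fun i =>
                if η ≤ ‖f (x i) - g (x i)‖ ∧ ⌊‖f (x i) - g (x i)‖ - η⌋₊ = k
                  then S i ∩ V' k else ∅) :=
              fun i j hij => Disjoint.mono (hDsub i) (hDsub j) (hdisj' hij)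
            calc (∑' i, (if η ≤ ‖f (x i) - g (x i)‖ ∧ ⌊‖f (x i) - g (x i)‖ - η⌋₊ = k
                  then μ (S i ∩ V' k) else 0))
                = ∑' i, μ (if η ≤ ‖f (x i) - g (x i)‖ ∧ ⌊‖f (x i) - g (x i)‖ - η⌋₊ = k
                    then S i ∩ V' k else ∅) := by
                  refine tsum_congr fun i => ?_
                  split <;> simp
              _ = μ (⋃ i, if η ≤ ‖f (x i) - g (x i)‖ ∧ ⌊‖f (x i) - g (x i)‖ - η⌋₊ = k
                    then S i ∩ V' k else ∅) := (measure_iUnion hDd hDm).symm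
              _ ≤ μ (V' k) := measure_mono (iUnion_subset fun i => by
                  split
                  · exact inter_subset_right
                  · exact empty_subset _)
          refine le_trans (ENNReal.tsum_le_tsum hkbound) ?_
          have hstep2 : ∀ k : ℕ, ENNReal.ofReal (η + k + 1) * μ (V' k)
              ≤ ENNReal.ofReal (η + k + 1) * μ (E' k)
                + ENNReal.ofReal (η + k + 1) * ENNReal.ofReal (ck k) := by
            intro k
            rw [← mul_add]
            exact mul_le_mul_right (hV'small k) _
          refine le_trans (ENNReal.tsum_le_tsum hstep2) ?_
          rw [ENNReal.tsum_add]
          exact add_le_add hEbound hckbound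
      -- assemble
      rw [hsplit, Finset.sum_congr rfl hper]
      refine le_trans (Finset.sum_le_sum fun i _ => htri i) ?_
      rw [Finset.sum_add_distrib, Finset.sum_add_distrib]
      calc ((∑ i ∈ Finset.range n, ∫⁻ y in S i, ‖f' y - g y‖₊ ∂μ)
            + ∑ i ∈ Finset.range n, ∫⁻ y in S i, ‖g y - g (x i)‖₊ ∂μ)
            + ∑ i ∈ Finset.range n, (‖g (x i) - f (x i)‖₊ : ℝ≥0∞) * μ (S i)
          ≤ (ENNReal.ofReal (ε / 16) + ENNReal.ofReal (ε / 16))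
            + (ENNReal.ofReal (ε / 16)
              + (ENNReal.ofReal (ε / 16) + ENNReal.ofReal (ε / 16) + ENNReal.ofReal (ε / 8))) :=
            add_le_add (add_le_add hA hB) hC
        _ ≤ ENNReal.ofReal ε := by
            rw [← ENNReal.ofReal_add, ← ENNReal.ofReal_add, ← ENNReal.ofReal_add,
              ← ENNReal.ofReal_add]
            · exact ENNReal.ofReal_le_ofReal (by linarith)
            all_goals positivity
    calc (∫⁻ y in Un, ‖f' y - sfun y‖₊ ∂μ) + ∫⁻ y in Unᶜ, ‖f' y - sfun y‖₊ ∂μ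
        ≤ ENNReal.ofReal ε + ∫⁻ y in Unᶜ, ‖f' y - sfun y‖₊ ∂μ := add_le_add_left hUnpart _
      _ < ENNReal.ofReal ε + (ENNReal.ofReal ε + ENNReal.ofReal ε) :=
          ENNReal.add_lt_add_left (by simp) hcompl
      _ = ENNReal.ofReal (3 * ε) := by
          rw [← ENNReal.ofReal_add, ← ENNReal.ofReal_add]
          · congr 1; ring
          all_goals positivity
  -- conclusion
  have hind : ∀ i, Integrable ((S i).indicator (fun _ => f (x i))) μ := fun i =>
    (integrable_indicator_iff (hSm i)).2 (integrableOn_const (hSfin i).ne)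
  have hsfuni : Integrable sfun μ := by
    simp only [hsfundef]
    exact integrable_finset_sum _ (fun i _ => hind i)
  have heq : ∫ y, (f y - sfun y) ∂μ
      = (∫ y, f y ∂μ) - ∑ i ∈ Finset.range n, (μ (S i)).toReal • f (x i) := by
    rw [integral_sub hfi hsfuni]
    congr 1
    simp only [hsfundef]
    rw [integral_finset_sum _ (fun i _ => hind i)]
    exact Finset.sum_congr rfl (fun i _ => integral_indicator_const _ (hSm i))
  have hB2 : (∫ y, ‖f y - sfun y‖ ∂μ) = (∫⁻ y, ‖f y - sfun y‖₊ ∂μ).toReal :=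
    integral_norm_eq_lintegral_enorm (haesm.sub hsfuni.1)
  have hgoal1 : ‖(∫ y, f y ∂μ) - ∑ i ∈ Finset.range n, (μ (S i)).toReal • f (x i)‖
      ≤ ∫ y, ‖f y - sfun y‖ ∂μ := by
    rw [← heq]
    exact norm_integral_le_integral_norm _
  have hgoal2 : (∫ y, ‖f y - sfun y‖ ∂μ) < 3 * ε := by
    rw [hB2]
    exact ENNReal.toReal_lt_of_lt_ofReal key
  exact ⟨hgoal1, hgoal2⟩
end

section
/- Let μ be a Radon measure on (X, M), Y a Banach space, and 𝒮 a μ-a.e. λ-Morse cover of X such that for each S ∈ 𝒮 one has μ(S \ S°) = 0, where S° is the interior of S. Suppose G : M → Y is countably additive, G(E) = 0 whenever μ(E) = 0, and M := sup{ Σ_i ‖G(S_i)‖ : ⟨S_i⟩ a sequence from 𝒮 that is μ-exhausting of X } < +∞. Suppose further there is a μ-measurable f : X → Y such that for every ε > 0 there is a gauge function δ : X → (0,1] with the property that for every δ-fine sequence ⟨S_i(x_i)⟩ from 𝒮 that is μ-exhausting of X, Σ_i ‖f(x_i)·μ(S_i) − G(S_i)‖ < ε. Then f is Bochner μ-integrable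 and ∫_X f dμ = G(X). -/
open MeasureTheory Set Metric Filter

open scoped ENNReal NNReal

section AuxG

variable {X Y : Type*} [MeasurableSpace X]
variable [NormedAddCommGroup Y]

/-- Abbreviation for the countable additivity hypothesis. -/
def AuxGAdd (G : Set X → Y) : Prop :=
  ∀ E : ℕ → Set X, (∀ i, MeasurableSet (E i)) →
    (∀ i j, i ≠ j → Disjoint (E i) (E j)) →
    Filter.Tendsto (fun n => ∑ i ∈ Finset.range n, G (E i)) Filter.atTop
      (nhds (G (⋃ i, E i)))

theorem aux_G_finAdd (G : Set X → Y) (hG0 : G ∅ = 0) (hGadd : AuxGAdd G)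
    {P Q : Set X} (hP : MeasurableSet P) (hQ : MeasurableSet Q) (hPQ : Disjoint P Q) :
    G (P ∪ Q) = G P + G Q := by
  classical
  set E : ℕ → Set X := fun n => if n = 0 then P else if n = 1 then Q else ∅ with hE
  have hEmeas : ∀ i, MeasurableSet (E i) := by
    intro i; simp only [hE]; split_ifs <;> first | exact hP | exact hQ | exact MeasurableSet.empty
  have hEdisj : ∀ i j, i ≠ j → Disjoint (E i) (E j) := by
    intro i j hij
    simp only [hE]
    split_ifs with h1 h2 h3 h4 h5 <;>
      first
        | (exact absurd (by omega : i = j) hij)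
        | exact hPQ
        | exact hPQ.symm
        | simp
  have hU : (⋃ i, E i) = P ∪ Q := by
    ext x
    simp only [Set.mem_iUnion, Set.mem_union]
    constructor
    · rintro ⟨i, hi⟩
      match i, hi with
      | 0, hi => exact Or.inl (by simpa [hE] using hi)
      | 1, hi => exact Or.inr (by simpa [hE] using hi)
      | (n+2), hi => simp [hE] at hi
    · rintro (h | h)
      · exact ⟨0, by simpa [hE] using h⟩
      · exact ⟨1, by simpa [hE] using h⟩
  have h2 : Filter.Tendsto (fun n => ∑ i ∈ Finset.range n, G (E i)) Filter.atTop
      (nhds (G (P ∪ Q))) := by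
    have := hGadd E hEmeas hEdisj
    rwa [hU] at this
  have h3 : ∀ n ≥ 2, ∑ i ∈ Finset.range n, G (E i) = G P + G Q := by
    intro n hn
    have hsub : Finset.range 2 ⊆ Finset.range n := Finset.range_subset_range.2 hn
    have : ∑ i ∈ Finset.range n, G (E i) = ∑ i ∈ Finset.range 2, G (E i) := by
      refine (Finset.sum_subset hsub ?_).symm
      intro i _ hi2
      have hi : 2 ≤ i := by simp [Finset.mem_range, not_lt] at hi2; omega
      have : E i = ∅ := by
        simp only [hE]
        rw [if_neg (by omega), if_neg (by omega)]
      rw [this, hG0]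
    rw [this]
    simp [Finset.sum_range_succ, hE]
  have h4 : Filter.Tendsto (fun n => ∑ i ∈ Finset.range n, G (E i)) Filter.atTop
      (nhds (G P + G Q)) := by
    refine Filter.Tendsto.congr' ?_ tendsto_const_nhds
    filter_upwards [Filter.eventually_ge_atTop 2] with n hn
    exact (h3 n hn).symm
  exact tendsto_nhds_unique h2 h4

theorem aux_G_zero (G : Set X → Y) (hGadd : AuxGAdd G)
    {D : ℕ → Set X} (hmeas : ∀ i, MeasurableSet (D i))
    (hdisj : ∀ i j, i ≠ j → Disjoint (D i) (D j)) :
    Filter.Tendsto (fun n => G (D n)) Filter.atTop (nhds 0) := by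
  have h := hGadd D hmeas hdisj
  have h' : Filter.Tendsto (fun n => ∑ i ∈ Finset.range (n + 1), G (D i)) Filter.atTop
      (nhds (G (⋃ i, D i))) := h.comp (tendsto_add_atTop_nat 1)
  have heq : (fun n => G (D n)) =
      fun n => (∑ i ∈ Finset.range (n + 1), G (D i)) - ∑ i ∈ Finset.range n, G (D i) := by
    funext n; rw [Finset.sum_range_succ]; abel
  rw [heq]
  simpa using h'.sub h

theorem aux_G_incr (G : Set X → Y) (hG0 : G ∅ = 0) (hGadd : AuxGAdd G)
    {E : ℕ → Set X} (hmono : Monotone E) (hmeas : ∀ n, MeasurableSet (E n)) :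
    Filter.Tendsto (fun n => G (E n)) Filter.atTop (nhds (G (⋃ n, E n))) := by
  have hdm : ∀ n, MeasurableSet (disjointed E n) := MeasurableSet.disjointed hmeas
  have hdd : ∀ i j, i ≠ j → Disjoint (disjointed E i) (disjointed E j) :=
    fun i j h => disjoint_disjointed E h
  have h := hGadd _ hdm hdd
  rw [iUnion_disjointed] at h
  have key : ∀ n, ∑ i ∈ Finset.range (n + 1), G (disjointed E i) = G (E n) := by
    intro n
    induction n with
    | zero => simp [disjointed_zero]
    | succ n ih =>
        rw [Finset.sum_range_succ, ih, Monotone.disjointed_add_one hmono,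
          ← aux_G_finAdd G hG0 hGadd (hmeas n) ((hmeas (n + 1)).diff (hmeas n))
            disjoint_sdiff_self_right,
          Set.union_diff_cancel (hmono (Nat.le_succ n))]
  have h2 : Filter.Tendsto (fun n => ∑ i ∈ Finset.range (n + 1), G (disjointed E i))
      Filter.atTop (nhds (G (⋃ n, E n))) := h.comp (tendsto_add_atTop_nat 1)
  simpa [key] using h2

/-- Vanishing at infinity along an increasing exhaustion. -/
theorem aux_G_vanish (G : Set X → Y) (hG0 : G ∅ = 0) (hGadd : AuxGAdd G)
    {A : ℕ → Set X} (hmono : Monotone A) (hmeas : ∀ n, MeasurableSet (A n))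
    (hU : (⋃ n, A n) = Set.univ) {ε : ℝ} (hε : 0 < ε) :
    ∃ m : ℕ, ∀ E : Set X, MeasurableSet E → E ⊆ (A m)ᶜ → ‖G E‖ ≤ ε := by
  by_contra hcon
  push_neg at hcon
  choose Efun hEmeas hEsub hEnorm using hcon
  have key : ∀ m k : ℕ, ∃ l, k ≤ l ∧ ε / 2 < ‖G (Efun m ∩ A l)‖ := by
    intro m k
    have hmonoEA : Monotone fun l => Efun m ∩ A l :=
      fun a b hab => Set.inter_subset_inter_right _ (hmono hab)
    have hmeasEA : ∀ l, MeasurableSet (Efun m ∩ A l) :=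
      fun l => (hEmeas m).inter (hmeas l)
    have ht := aux_G_incr G hG0 hGadd hmonoEA hmeasEA
    have hUEA : (⋃ l, Efun m ∩ A l) = Efun m := by
      rw [← Set.inter_iUnion, hU, Set.inter_univ]
    rw [hUEA] at ht
    have hlim : ε / 2 < ‖G (Efun m)‖ := lt_of_lt_of_le (by linarith) (hEnorm m).le
    have hev : ∀ᶠ l in Filter.atTop, ε / 2 < ‖G (Efun m ∩ A l)‖ :=
      ht.norm.eventually (eventually_gt_nhds hlim)
    obtain ⟨l, hl1, hl2⟩ := (hev.and (Filter.eventually_ge_atTop k)).exists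
    exact ⟨l, hl2, hl1⟩
  choose lfun hl1 hl2 using key
  let mseq : ℕ → ℕ := fun n => Nat.rec 0 (fun _ prev => lfun prev (prev + 1)) n
  have hms : ∀ n, mseq (n + 1) = lfun (mseq n) (mseq n + 1) := fun n => rfl
  have hstrict : StrictMono mseq := by
    refine strictMono_nat_of_lt_succ fun n => ?_
    have := hl1 (mseq n) (mseq n + 1)
    rw [← hms n] at this
    omega
  set D : ℕ → Set X := fun n => Efun (mseq n) ∩ A (mseq (n + 1)) with hD
  have hDmeas : ∀ n, MeasurableSet (D n) := fun n => (hEmeas _).inter (hmeas _)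
  have hDnorm : ∀ n, ε / 2 < ‖G (D n)‖ := by
    intro n
    have := hl2 (mseq n) (mseq n + 1)
    rw [← hms n] at this
    exact this
  have hDdisj : ∀ i j, i ≠ j → Disjoint (D i) (D j) := by
    have haux : ∀ i j, i < j → Disjoint (D i) (D j) := by
      intro i j hij
      have h1 : D i ⊆ A (mseq j) := by
        refine (Set.inter_subset_right).trans (hmono ?_)
        exact hstrict.monotone (by omega : i + 1 ≤ j)
      have h2 : D j ⊆ (A (mseq j))ᶜ :=
        (Set.inter_subset_left).trans (hEsub (mseq j))
      exact Set.disjoint_of_subset h1 h2 disjoint_compl_right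
    intro i j hij
    rcases lt_or_gt_of_ne hij with h | h
    · exact haux i j h
    · exact (haux j i h).symm
  have hzero := aux_G_zero G hGadd hDmeas hDdisj
  have : ∀ᶠ n in Filter.atTop, ‖G (D n)‖ < ε / 2 :=
    hzero.norm.eventually (by simpa using eventually_lt_nhds (by linarith : (0:ℝ) < ε / 2))
  obtain ⟨n, hn⟩ := this.exists
  exact absurd (hDnorm n) (not_lt.2 hn.le)

/-- ε-δ absolute continuity of a countably additive vector measure vanishing on null sets. -/
theorem aux_G_abscont (μ : Measure X) (G : Set X → Y) (hG0 : G ∅ = 0) (hGadd : AuxGAdd G)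
    (hGnull : ∀ E, MeasurableSet E → μ E = 0 → G E = 0) {ε : ℝ} (hε : 0 < ε) :
    ∃ δ : ℝ, 0 < δ ∧ ∀ E, MeasurableSet E → μ E ≤ ENNReal.ofReal δ → ‖G E‖ ≤ ε := by
  by_contra hcon
  push_neg at hcon
  have hcon' : ∀ k : ℕ, ∃ E, MeasurableSet E ∧ μ E ≤ ENNReal.ofReal ((1/2) ^ k) ∧
      ε < ‖G E‖ := by
    intro k
    obtain ⟨E, hE1, hE2, hE3⟩ := hcon ((1/2) ^ k) (by positivity)
    exact ⟨E, hE1, hE2, hE3⟩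
  choose Efun hEmeas hEμ hEnorm using hcon'
  set B : ℕ → Set X := fun m => ⋃ k, Efun (m + k) with hB
  have hBmeas : ∀ m, MeasurableSet (B m) := fun m => MeasurableSet.iUnion fun k => hEmeas _
  have hEB : ∀ k, Efun k ⊆ B k := by
    intro k
    have : Efun (k + 0) ⊆ B k := Set.subset_iUnion (fun j => Efun (k + j)) 0
    simpa using this
  have hBanti : Antitone B := by
    intro a b hab
    refine Set.iUnion_subset fun k => ?_
    have : b + k = a + (b - a + k) := by omega
    rw [this]
    exact Set.subset_iUnion (fun j => Efun (a + j)) (b - a + k)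
  have hBμ : ∀ m, μ (B m) ≤ ENNReal.ofReal ((1/2) ^ m * 2) := by
    intro m
    calc μ (B m) ≤ ∑' k, μ (Efun (m + k)) := measure_iUnion_le _
      _ ≤ ∑' k : ℕ, ENNReal.ofReal ((1/2) ^ (m + k)) :=
          ENNReal.tsum_le_tsum fun k => hEμ _
      _ = ENNReal.ofReal (∑' k : ℕ, (1/2 : ℝ) ^ (m + k)) := by
          rw [ENNReal.ofReal_tsum_of_nonneg (fun k => by positivity)]
          · exact (summable_geometric_of_lt_one (by norm_num) (by norm_num)).comp_injective
              (add_right_injective m) |>.congr (fun k => rfl)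
      _ = ENNReal.ofReal ((1/2) ^ m * 2) := by
          congr 1
          have : ∀ k : ℕ, (1/2 : ℝ) ^ (m + k) = (1/2) ^ m * (1/2) ^ k := fun k => pow_add _ _ _
          rw [tsum_congr this, tsum_mul_left, tsum_geometric_of_lt_one (by norm_num) (by norm_num)]
          norm_num
  set Binf := ⋂ m, B m with hBinf
  have hBinfMeas : MeasurableSet Binf := MeasurableSet.iInter fun m => hBmeas m
  have hBinfNull : μ Binf = 0 := by
    refine le_antisymm ?_ (zero_le)
    have htend : Filter.Tendsto (fun m => ENNReal.ofReal ((1/2 : ℝ) ^ m * 2)) Filter.atTop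
        (nhds 0) := by
      rw [← ENNReal.ofReal_zero]
      refine ENNReal.tendsto_ofReal ?_
      have h0 : Filter.Tendsto (fun m : ℕ => (1/2 : ℝ) ^ m) Filter.atTop (nhds 0) :=
        tendsto_pow_atTop_nhds_zero_of_lt_one (by norm_num) (by norm_num)
      simpa using h0.mul_const 2
    exact ge_of_tendsto htend (Filter.Eventually.of_forall fun m =>
      (measure_mono (Set.iInter_subset _ m)).trans (hBμ m))
  have key : ∀ j k : ℕ, ∃ l, k ≤ l ∧ ε / 2 < ‖G (Efun j \ B l)‖ := by
    intro j k
    have hmono2 : Monotone fun l => Efun j \ B l :=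
      fun a b hab => Set.diff_subset_diff_right (hBanti hab)
    have hmeas2 : ∀ l, MeasurableSet (Efun j \ B l) := fun l => (hEmeas j).diff (hBmeas l)
    have ht := aux_G_incr G hG0 hGadd hmono2 hmeas2
    have hU2 : (⋃ l, Efun j \ B l) = Efun j \ Binf := by
      rw [hBinf, Set.diff_iInter]
    rw [hU2] at ht
    have hGeq : G (Efun j \ Binf) = G (Efun j) := by
      have h1 : G ((Efun j \ Binf) ∪ (Efun j ∩ Binf)) = G (Efun j \ Binf) + G (Efun j ∩ Binf) :=
        aux_G_finAdd G hG0 hGadd ((hEmeas j).diff hBinfMeas) ((hEmeas j).inter hBinfMeas)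
          (disjoint_sdiff_self_left.mono_right Set.inter_subset_right)
      have h2 : (Efun j \ Binf) ∪ (Efun j ∩ Binf) = Efun j := Set.diff_union_inter _ _
      have h3 : G (Efun j ∩ Binf) = 0 :=
        hGnull _ ((hEmeas j).inter hBinfMeas)
          (le_antisymm ((measure_mono Set.inter_subset_right).trans hBinfNull.le) (zero_le))
      rw [h2] at h1
      rw [h1, h3, add_zero]
    rw [hGeq] at ht
    have hlim : ε / 2 < ‖G (Efun j)‖ := lt_of_lt_of_le (by linarith) (hEnorm j).le
    have hev : ∀ᶠ l in Filter.atTop, ε / 2 < ‖G (Efun j \ B l)‖ :=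
      ht.norm.eventually (eventually_gt_nhds hlim)
    obtain ⟨l, hl1, hl2⟩ := (hev.and (Filter.eventually_ge_atTop k)).exists
    exact ⟨l, hl2, hl1⟩
  choose lfun hl1 hl2 using key
  let kseq : ℕ → ℕ := fun n => Nat.rec 0 (fun _ prev => lfun prev (prev + 1)) n
  have hks : ∀ n, kseq (n + 1) = lfun (kseq n) (kseq n + 1) := fun n => rfl
  have hstrict : StrictMono kseq := by
    refine strictMono_nat_of_lt_succ fun n => ?_
    have := hl1 (kseq n) (kseq n + 1)
    rw [← hks n] at this
    omega
  set D : ℕ → Set X := fun n => Efun (kseq n) \ B (kseq (n + 1)) with hD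
  have hDmeas : ∀ n, MeasurableSet (D n) := fun n => (hEmeas _).diff (hBmeas _)
  have hDnorm : ∀ n, ε / 2 < ‖G (D n)‖ := by
    intro n
    have := hl2 (kseq n) (kseq n + 1)
    rw [← hks n] at this
    exact this
  have hDdisj : ∀ i j, i ≠ j → Disjoint (D i) (D j) := by
    have haux : ∀ i j, i < j → Disjoint (D i) (D j) := by
      intro i j hij
      have h1 : D j ⊆ B (kseq (i + 1)) := by
        refine (Set.diff_subset.trans (hEB (kseq j))).trans (hBanti ?_)
        exact hstrict.monotone (by omega : i + 1 ≤ j)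
      have h2 : Disjoint (B (kseq (i + 1))) (D i) := by
        rw [Set.disjoint_iff_inter_eq_empty]
        ext x
        simp only [hD, Set.mem_inter_iff, Set.mem_diff, Set.mem_empty_iff_false, iff_false]
        rintro ⟨hx1, _, hx2⟩
        exact hx2 hx1
      exact (h2.mono_left h1).symm
    intro i j hij
    rcases lt_or_gt_of_ne hij with h | h
    · exact haux i j h
    · exact (haux j i h).symm
  have hzero := aux_G_zero G hGadd hDmeas hDdisj
  have : ∀ᶠ n in Filter.atTop, ‖G (D n)‖ < ε / 2 :=
    hzero.norm.eventually (by simpa using eventually_lt_nhds (by linarith : (0:ℝ) < ε / 2))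
  obtain ⟨n, hn⟩ := this.exists
  exact absurd (hDnorm n) (not_lt.2 hn.le)


end AuxG

theorem aux_lusin {X Y : Type*} [MeasurableSpace X] [TopologicalSpace X]
    [OpensMeasurableSpace X] [T2Space X]
    (μ : Measure X) [μ.IsComplete] [μ.InnerRegularCompactLTTop]
    [NormedAddCommGroup Y]
    {f : X → Y} (hfm : AEStronglyMeasurable f μ)
    {A : Set X} (hA : MeasurableSet A) (hAfin : μ A ≠ ⊤)
    {η θ : ℝ} (hη : 0 < η) (hθ : 0 < θ) :
    ∃ (J : ℕ) (K : ℕ → Set X) (C : ℝ),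
      (∀ j, IsCompact (K j)) ∧ (∀ j, K j ⊆ A) ∧
      (∀ i j, i ≠ j → Disjoint (K i) (K j)) ∧
      (∀ j, J ≤ j → K j = ∅) ∧
      μ (A \ ⋃ j, K j) ≤ ENNReal.ofReal θ ∧
      0 ≤ C ∧
      (∀ j, ∀ x ∈ K j, ∀ y ∈ K j, ‖f x - f y‖ ≤ η) ∧
      (∀ j, ∀ x ∈ K j, ‖f x‖ ≤ C) := by
  classical
  set g := hfm.mk f with hgdef
  have hg : StronglyMeasurable g := hfm.stronglyMeasurable_mk
  have hfg : f =ᵐ[μ] g := hfm.ae_eq_mk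
  have hnull : μ {x | ¬ f x = g x} = 0 := by
    simpa [Filter.EventuallyEq, ae_iff] using hfg
  have hEqMeas : MeasurableSet {x | f x = g x} := by
    have h1 : MeasurableSet {x | ¬ f x = g x} := ‹μ.IsComplete›.out _ hnull
    have h2 : {x | f x = g x} = {x | ¬ f x = g x}ᶜ := by ext x; simp
    rw [h2]; exact h1.compl
  set A' := A ∩ {x | f x = g x} with hA'def
  have hA'meas : MeasurableSet A' := hA.inter hEqMeas
  have hA'fin : μ A' ≠ ⊤ :=
    ((measure_mono Set.inter_subset_left).trans_lt (lt_top_iff_ne_top.2 hAfin)).ne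
  have hAA' : μ (A \ A') = 0 := by
    have hsub : A \ A' ⊆ {x | ¬ f x = g x} := by
      intro x hx
      simp only [hA'def, Set.mem_diff, Set.mem_inter_iff, not_and] at hx
      exact hx.2 hx.1
    exact le_antisymm ((measure_mono hsub).trans hnull.le) (zero_le)
  obtain ⟨c, hc_count, hc_sub⟩ := hg.isSeparable_range
  rcases c.eq_empty_or_nonempty with hc | hc
  · -- degenerate: A' is empty
    have hA'empty : A' = ∅ := by
      rw [Set.eq_empty_iff_forall_notMem]
      intro x hx
      have : g x ∈ closure c := hc_sub (Set.mem_range_self x)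
      rw [hc, closure_empty] at this
      exact absurd this (Set.notMem_empty _)
    refine ⟨0, fun _ => ∅, 0, fun _ => isCompact_empty, fun _ => Set.empty_subset _,
      fun _ _ _ => by simp, fun _ _ => rfl, ?_, le_refl _, by simp, by simp⟩
    have h1 : μ (A \ ⋃ (_ : ℕ), (∅ : Set X)) = μ A := by simp
    have h2 : μ A = 0 := by
      have hsub2 : A ⊆ (A \ A') ∪ A' := by
        intro x hx; by_cases h : x ∈ A' <;> simp [h, hx]
      refine le_antisymm ?_ (zero_le)
      calc μ A ≤ μ (A \ A') + μ A' := (measure_mono hsub2).trans (measure_union_le _ _)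
        _ ≤ 0 := by rw [hAA', hA'empty, measure_empty, add_zero]
    rw [h1, h2]
    exact zero_le
  obtain ⟨v, hv⟩ := hc_count.exists_eq_range hc
  set D : ℕ → Set X := fun q => A' ∩ {x | ‖g x - v q‖ < η / 3} with hDdef
  have hDmeas : ∀ q, MeasurableSet (D q) := by
    intro q
    refine hA'meas.inter ?_
    have hsm : Measurable fun x => ‖g x - v q‖ :=
      ((hg.sub stronglyMeasurable_const).norm).measurable
    exact measurableSet_lt hsm measurable_const
  have hDcover : A' = ⋃ q, D q := by
    apply Set.Subset.antisymm
    · intro x hx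
      have hgx : g x ∈ closure c := hc_sub (Set.mem_range_self x)
      obtain ⟨y, hyc, hy⟩ := Metric.mem_closure_iff.1 hgx (η / 3) (by positivity)
      have hyr : y ∈ Set.range v := by rw [← hv]; exact hyc
      obtain ⟨q, rfl⟩ := hyr
      refine Set.mem_iUnion.2 ⟨q, hx, ?_⟩
      simpa [dist_eq_norm] using hy
    · exact Set.iUnion_subset fun q => Set.inter_subset_left
  set E : ℕ → Set X := disjointed D with hEdef
  have hEmeas : ∀ q, MeasurableSet (E q) := MeasurableSet.disjointed hDmeas
  have hEdisj : ∀ i j, i ≠ j → Disjoint (E i) (E j) := fun i j h => disjoint_disjointed D h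
  have hEsub : ∀ q, E q ⊆ D q := disjointed_subset D
  have hEUnion : (⋃ q, E q) = A' := by rw [hEdef, iUnion_disjointed, ← hDcover]
  -- choose Q
  set S : ℕ → Set X := fun n => A' \ ⋃ (q : ℕ) (_ : q ∈ Finset.range n), E q with hSdef
  have hSmeas : ∀ n, MeasurableSet (S n) :=
    fun n => hA'meas.diff (MeasurableSet.biUnion (Finset.range n).countable_toSet
      (fun q _ => hEmeas q))
  have hSanti : Antitone S := by
    intro a b hab
    refine Set.diff_subset_diff_right (Set.iUnion₂_subset fun q hq => ?_)
    have hq' : q ∈ Finset.range b := by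
      simp only [Finset.mem_range] at hq ⊢; omega
    exact Set.subset_iUnion₂ (s := fun q (_ : q ∈ Finset.range b) => E q) q hq'
  have hSiInter : (⋂ n, S n) = ∅ := by
    rw [Set.eq_empty_iff_forall_notMem]
    intro x hx
    have hx' : ∀ n, x ∈ S n := Set.mem_iInter.1 hx
    have hxA' : x ∈ A' := (hx' 0).1
    rw [← hEUnion] at hxA'
    obtain ⟨q, hq⟩ := Set.mem_iUnion.1 hxA'
    have := hx' (q + 1)
    simp only [hSdef, Set.mem_diff, Set.mem_iUnion] at this
    exact this.2 ⟨q, by simp [Finset.mem_range], hq⟩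
  have htendS : Filter.Tendsto (fun n => μ (S n)) Filter.atTop (nhds 0) := by
    have := MeasureTheory.tendsto_measure_iInter_atTop
      (fun n => (hSmeas n).nullMeasurableSet) hSanti
      ⟨0, ((measure_mono Set.diff_subset).trans_lt (lt_top_iff_ne_top.2 hA'fin)).ne⟩
    rw [hSiInter] at this
    simpa [Function.comp_def] using this
  have hQex : ∃ Q, μ (S Q) ≤ ENNReal.ofReal (θ / 4) := by
    have : ∀ᶠ n in Filter.atTop, μ (S n) < ENNReal.ofReal (θ / 4) :=
      htendS.eventually (eventually_lt_nhds (ENNReal.ofReal_pos.2 (by positivity)))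
    obtain ⟨Q, hQ⟩ := this.exists
    exact ⟨Q, hQ.le⟩
  obtain ⟨Q, hQ⟩ := hQex
  -- compacts inside each E q
  have hchoice : ∀ q : ℕ, ∃ Kq : Set X, Kq ⊆ E q ∧ IsCompact Kq ∧
      μ (E q \ Kq) ≤ ENNReal.ofReal (θ / (4 * (Q + 1))) := by
    intro q
    have hEfin : μ (E q) ≠ ⊤ := by
      refine ((measure_mono ?_).trans_lt (lt_top_iff_ne_top.2 hA'fin)).ne
      exact (hEsub q).trans Set.inter_subset_left
    have hne : (ENNReal.ofReal (θ / (4 * (Q + 1)))) ≠ 0 := by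
      simp only [ne_eq, ENNReal.ofReal_eq_zero, not_le]
      positivity
    obtain ⟨Kq, hK1, hK2, hK3⟩ := (hEmeas q).exists_isCompact_lt_add hEfin hne
    refine ⟨Kq, hK1, hK2, ?_⟩
    rw [measure_diff hK1 hK2.measurableSet.nullMeasurableSet
      (((measure_mono hK1).trans_lt (lt_top_iff_ne_top.2 hEfin)).ne)]
    exact tsub_le_iff_right.2 (by rw [add_comm]; exact hK3.le)
  choose K0 hK0sub hK0cpt hK0μ using hchoice
  set K : ℕ → Set X := fun j => if j < Q then K0 j else ∅ with hKdef
  set C : ℝ := (∑ q ∈ Finset.range Q, ‖v q‖) + η with hCdef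
  have hKsubE : ∀ j, K j ⊆ E j := by
    intro j
    simp only [hKdef]
    split_ifs
    · exact hK0sub j
    · exact Set.empty_subset _
  refine ⟨Q, K, C, ?_, ?_, ?_, ?_, ?_, ?_, ?_, ?_⟩
  · intro j; simp only [hKdef]; split_ifs; exacts [hK0cpt j, isCompact_empty]
  · intro j
    exact (hKsubE j).trans ((hEsub j).trans (Set.inter_subset_left.trans Set.inter_subset_left))
  · intro i j hij
    exact (hEdisj i j hij).mono (hKsubE i) (hKsubE j)
  · intro j hj; simp only [hKdef]; rw [if_neg (by omega)]
  · -- measure bound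
    have hsub : A \ (⋃ j, K j) ⊆ (A \ A') ∪ (S Q ∪ ⋃ (q : ℕ) (_ : q ∈ Finset.range Q), (E q \ K0 q)) := by
      intro x hx
      obtain ⟨hxA, hxK⟩ := hx
      by_cases hxA' : x ∈ A'
      · right
        by_cases hxE : x ∈ ⋃ (q : ℕ) (_ : q ∈ Finset.range Q), E q
        · right
          simp only [Set.mem_iUnion] at hxE ⊢
          obtain ⟨q, hq1, hq2⟩ := hxE
          refine ⟨q, hq1, hq2, ?_⟩
          intro hxK0
          refine hxK (Set.mem_iUnion.2 ⟨q, ?_⟩)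
          simp only [hKdef]
          rw [if_pos (Finset.mem_range.1 hq1)]
          exact hxK0
        · left; exact ⟨hxA', hxE⟩
      · left; exact ⟨hxA, hxA'⟩
    calc μ (A \ ⋃ j, K j)
        ≤ μ ((A \ A')) + (μ (S Q) + μ (⋃ (q : ℕ) (_ : q ∈ Finset.range Q), (E q \ K0 q))) := by
          refine (measure_mono hsub).trans ?_
          refine (measure_union_le _ _).trans ?_
          exact add_le_add le_rfl (measure_union_le _ _)
      _ ≤ 0 + (ENNReal.ofReal (θ / 4) + ∑ q ∈ Finset.range Q, ENNReal.ofReal (θ / (4 * (Q + 1)))) := by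
          refine add_le_add hAA'.le (add_le_add hQ ?_)
          exact (measure_biUnion_finset_le _ _).trans (Finset.sum_le_sum fun q _ => hK0μ q)
      _ ≤ ENNReal.ofReal θ := by
          rw [zero_add, Finset.sum_const, Finset.card_range, nsmul_eq_mul]
          have hQR : (0:ℝ) ≤ (Q:ℝ) := Nat.cast_nonneg Q
          have h1 : (Q : ℝ≥0∞) * ENNReal.ofReal (θ / (4 * ((Q:ℝ) + 1)))
              = ENNReal.ofReal ((Q:ℝ) * (θ / (4 * ((Q:ℝ) + 1)))) := by
            rw [ENNReal.ofReal_mul hQR, ENNReal.ofReal_natCast]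
          rw [h1, ← ENNReal.ofReal_add (by positivity) (by positivity)]
          refine ENNReal.ofReal_le_ofReal ?_
          have h4 : (Q:ℝ) / (4 * ((Q:ℝ) + 1)) ≤ 1/4 := by
            rw [div_le_div_iff₀ (by positivity) (by norm_num)]
            nlinarith [hQR]
          have hq1 : (Q : ℝ) * (θ / (4 * ((Q:ℝ) + 1))) ≤ θ / 4 := by
            have hmul := mul_le_mul_of_nonneg_left h4 hθ.le
            calc (Q:ℝ) * (θ / (4 * ((Q:ℝ)+1))) = θ * ((Q:ℝ) / (4*((Q:ℝ)+1))) := by ring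
              _ ≤ θ * (1/4) := hmul
              _ = θ/4 := by ring
          linarith
  · positivity
  · -- oscillation
    intro j x hx y hy
    simp only [hKdef] at hx hy
    by_cases hj : j < Q
    · rw [if_pos hj] at hx hy
      have hxD : x ∈ D j := (hEsub j) ((hK0sub j) hx)
      have hyD : y ∈ D j := (hEsub j) ((hK0sub j) hy)
      have hxA' : x ∈ A' := hxD.1
      have hyA' : y ∈ A' := hyD.1
      have hfx : f x = g x := hxA'.2
      have hfy : f y = g y := hyA'.2
      have h1 : ‖g x - v j‖ < η / 3 := hxD.2
      have h2 : ‖g y - v j‖ < η / 3 := hyD.2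
      calc ‖f x - f y‖ = ‖(g x - v j) - (g y - v j)‖ := by rw [hfx, hfy]; congr 1; abel
        _ ≤ ‖g x - v j‖ + ‖g y - v j‖ := norm_sub_le _ _
        _ ≤ η := by linarith
    · rw [if_neg hj] at hx; exact absurd hx (Set.notMem_empty x)
  · -- norm bound
    intro j x hx
    simp only [hKdef] at hx
    by_cases hj : j < Q
    · rw [if_pos hj] at hx
      have hxD : x ∈ D j := (hEsub j) ((hK0sub j) hx)
      have hfx : f x = g x := hxD.1.2
      have h1 : ‖g x - v j‖ < η / 3 := hxD.2
      have h2 : ‖f x‖ ≤ ‖v j‖ + η / 3 := by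
        calc ‖f x‖ = ‖(g x - v j) + v j‖ := by rw [hfx]; congr 1; abel
          _ ≤ ‖g x - v j‖ + ‖v j‖ := norm_add_le _ _
          _ ≤ ‖v j‖ + η / 3 := by linarith
      have h3 : ‖v j‖ ≤ ∑ q ∈ Finset.range Q, ‖v q‖ :=
        Finset.single_le_sum (fun q _ => norm_nonneg (v q)) (Finset.mem_range.2 hj)
      simp only [hCdef]
      linarith
    · rw [if_neg hj] at hx; exact absurd hx (Set.notMem_empty x)

theorem aux_finUnion_closed {X : Type*} [TopologicalSpace X] (K : ℕ → Set X) (J : ℕ)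
    (hKc : ∀ j, IsClosed (K j)) (hKe : ∀ j, J ≤ j → K j = ∅) :
    IsClosed (⋃ j, K j) := by
  have h : (⋃ j, K j) = ⋃ j ∈ Set.Iio J, K j := by
    apply Set.Subset.antisymm
    · refine Set.iUnion_subset fun j => ?_
      rcases lt_or_ge j J with h | h
      · exact Set.subset_biUnion_of_mem h
      · rw [hKe j h]; exact Set.empty_subset _
    · exact Set.iUnion₂_subset fun j _ => Set.subset_iUnion K j
  rw [h]
  exact (Set.finite_Iio J).isClosed_biUnion fun j _ => (hKc j)

theorem aux_core {X Y : Type*} [NormedAddCommGroup X] [NormedSpace ℝ X]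
    [MeasurableSpace X] [Nonempty X] [NormedAddCommGroup Y]
    (μ : Measure X) (lam : ℝ) (𝒮 : Set (X × Set X))
    (h𝒮 : IsAEMorseCover μ lam Set.univ 𝒮)
    (f : X → Y) (K : ℕ → Set X) (J : ℕ)
    (hKc : ∀ j, IsCompact (K j))
    (hKd : ∀ i j, i ≠ j → Disjoint (K i) (K j))
    (hKe : ∀ j, J ≤ j → K j = ∅)
    {η : ℝ} (hosc : ∀ j, ∀ x ∈ K j, ∀ y ∈ K j, ‖f x - f y‖ ≤ η)
    {ω : ℝ} (hω : 0 < ω)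
    (δ0 : X → ℝ) (hδ0 : ∀ x, δ0 x ∈ Set.Ioc (0:ℝ) 1) :
    ∃ (I : Set ℕ) (T : ℕ → X × Set X),
      IsExhausting μ Set.univ 𝒮 I T ∧
      (∀ i ∈ I, (T i).2 ⊆ Metric.closedBall (T i).1 (δ0 (T i).1)) ∧
      (∀ i ∈ I, (T i).1 ∉ (⋃ j, K j) → (T i).2 ∩ (⋃ j, K j) = ∅) ∧
      (∀ i ∈ I, (T i).1 ∈ (⋃ j, K j) →
        ((∀ x ∈ (T i).2 ∩ (⋃ j, K j), ‖f x - f ((T i).1)‖ ≤ η) ∧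
         (∀ x ∈ (T i).2, Metric.infDist x (⋃ j, K j) ≤ ω))) := by
  classical
  set KU : Set X := ⋃ j, K j with hKUdef
  have hKUclosed : IsClosed KU := aux_finUnion_closed K J (fun j => (hKc j).isClosed) hKe
  set Oth : ℕ → Set X := fun j => ⋃ l, if l = j then (∅ : Set X) else K l with hOthdef
  have hOthclosed : ∀ j, IsClosed (Oth j) := by
    intro j
    refine aux_finUnion_closed _ J (fun l => ?_) (fun l hl => ?_)
    · split_ifs; exacts [isClosed_empty, (hKc l).isClosed]
    · split_ifs; exacts [rfl, hKe l hl]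
  have hOthmem : ∀ j x, x ∈ Oth j ↔ ∃ l, l ≠ j ∧ x ∈ K l := by
    intro j x
    simp only [hOthdef, Set.mem_iUnion]
    constructor
    · rintro ⟨l, hl⟩
      by_cases h : l = j
      · rw [if_pos h] at hl; exact absurd hl (Set.notMem_empty x)
      · rw [if_neg h] at hl; exact ⟨l, h, hl⟩
    · rintro ⟨l, h1, h2⟩
      exact ⟨l, by rw [if_neg h1]; exact h2⟩
  have hmemK : ∀ x, x ∈ KU → ∃ j, x ∈ K j := fun x hx => Set.mem_iUnion.1 hx
  set δ : X → ℝ := fun x =>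
    if hx : x ∈ KU then
      min (δ0 x) (min (min ω 1)
        (if _ : (Oth (Classical.choose (hmemK x hx))).Nonempty then
          Metric.infDist x (Oth (Classical.choose (hmemK x hx))) / 2 else 1))
    else
      min (δ0 x) (min (min ω 1)
        (if _ : KU.Nonempty then Metric.infDist x KU / 2 else 1)) with hδdef
  have hδle0 : ∀ x, δ x ≤ δ0 x := by
    intro x; simp only [hδdef]; split_ifs <;> exact min_le_left _ _
  have hδleω : ∀ x, δ x ≤ ω := by
    intro x; simp only [hδdef]
    split_ifs <;> exact (min_le_right _ _).trans ((min_le_left _ _).trans (min_le_left _ _))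
  have hδpos : ∀ x, 0 < δ x := by
    intro x; simp only [hδdef]
    split_ifs with hx h2 h3
    · refine lt_min (hδ0 x).1 (lt_min (lt_min hω one_pos) ?_)
      have hxj : x ∈ K (Classical.choose (hmemK x hx)) := Classical.choose_spec (hmemK x hx)
      have hx_not : x ∉ Oth (Classical.choose (hmemK x hx)) := by
        rw [hOthmem]
        rintro ⟨l, hl1, hl2⟩
        exact Set.disjoint_left.1 (hKd l _ hl1) hl2 hxj
      have := (IsClosed.notMem_iff_infDist_pos (hOthclosed _) h2).1 hx_not
      linarith
    · exact lt_min (hδ0 x).1 (lt_min (lt_min hω one_pos) one_pos)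
    · refine lt_min (hδ0 x).1 (lt_min (lt_min hω one_pos) ?_)
      have := (IsClosed.notMem_iff_infDist_pos hKUclosed h3).1 hx
      linarith
    · exact lt_min (hδ0 x).1 (lt_min (lt_min hω one_pos) one_pos)
  have hδIoc : ∀ x, δ x ∈ Set.Ioc (0:ℝ) 1 :=
    fun x => ⟨hδpos x, (hδle0 x).trans (hδ0 x).2⟩
  obtain ⟨I, T, hexh, hfine⟩ :=
    h𝒮.2 Set.univ isOpen_univ Set.univ_nonempty (subset_refl _) δ (fun x _ => hδIoc x)
  refine ⟨I, T, hexh, ?_, ?_, ?_⟩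
  · intro i hi
    exact ((hfine i hi).2).trans (Metric.closedBall_subset_closedBall (hδle0 _))
  · intro i hi ha
    have hSb := (hfine i hi).2
    rw [Set.eq_empty_iff_forall_notMem]
    rintro x ⟨hxS, hxKU⟩
    have hKUne : KU.Nonempty := ⟨x, hxKU⟩
    have hδa : δ ((T i).1) ≤ Metric.infDist ((T i).1) KU / 2 := by
      simp only [hδdef]
      rw [dif_neg ha, dif_pos hKUne]
      exact (min_le_right _ _).trans (min_le_right _ _)
    have hd : dist x ((T i).1) ≤ δ ((T i).1) := Metric.mem_closedBall.1 (hSb hxS)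
    have hpos : 0 < Metric.infDist ((T i).1) KU :=
      (IsClosed.notMem_iff_infDist_pos hKUclosed hKUne).1 ha
    have hle : Metric.infDist ((T i).1) KU ≤ dist ((T i).1) x :=
      Metric.infDist_le_dist_of_mem hxKU
    rw [dist_comm] at hle
    linarith
  · intro i hi ha
    have hSb := (hfine i hi).2
    have hja : (T i).1 ∈ K (Classical.choose (hmemK ((T i).1) ha)) :=
      Classical.choose_spec (hmemK ((T i).1) ha)
    constructor
    · rintro x ⟨hxS, hxKU⟩
      obtain ⟨l, hxl⟩ := Set.mem_iUnion.1 hxKU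
      have hlj : l = Classical.choose (hmemK ((T i).1) ha) := by
        by_contra hne
        have hxOth : x ∈ Oth (Classical.choose (hmemK ((T i).1) ha)) :=
          (hOthmem _ x).2 ⟨l, hne, hxl⟩
        have hOthne : (Oth (Classical.choose (hmemK ((T i).1) ha))).Nonempty := ⟨x, hxOth⟩
        have hδa : δ ((T i).1) ≤
            Metric.infDist ((T i).1) (Oth (Classical.choose (hmemK ((T i).1) ha))) / 2 := by
          simp only [hδdef]
          rw [dif_pos ha, dif_pos hOthne]
          exact (min_le_right _ _).trans (min_le_right _ _)
        have hd : dist x ((T i).1) ≤ δ ((T i).1) := Metric.mem_closedBall.1 (hSb hxS)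
        have hnota : (T i).1 ∉ Oth (Classical.choose (hmemK ((T i).1) ha)) := by
          rw [hOthmem]
          rintro ⟨l', hl1, hl2⟩
          exact Set.disjoint_left.1 (hKd l' _ hl1) hl2 hja
        have hpos := (IsClosed.notMem_iff_infDist_pos (hOthclosed _) hOthne).1 hnota
        have hle : Metric.infDist ((T i).1)
            (Oth (Classical.choose (hmemK ((T i).1) ha))) ≤ dist ((T i).1) x :=
          Metric.infDist_le_dist_of_mem hxOth
        rw [dist_comm] at hle
        linarith
      exact hosc _ x (hlj ▸ hxl) _ hja
    · intro x hxS
      have hd : dist x ((T i).1) ≤ δ ((T i).1) := Metric.mem_closedBall.1 (hSb hxS)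
      have h1 : Metric.infDist x KU ≤ Metric.infDist ((T i).1) KU + dist x ((T i).1) :=
        Metric.infDist_le_infDist_add_dist
      have h2 : Metric.infDist ((T i).1) KU = 0 := Metric.infDist_zero_of_mem ha
      have hδa : δ ((T i).1) ≤ ω := hδleω _
      linarith

theorem ofReal_norm_eq_coe_nnnorm {E : Type*} [SeminormedAddCommGroup E] (x : E) :
    ENNReal.ofReal ‖x‖ = (‖x‖₊ : ENNReal) := by
  rw [← coe_nnnorm, ENNReal.ofReal_coe_nnreal]

theorem aux_term_bound {Y : Type*} [NormedAddCommGroup Y] [NormedSpace ℝ Y]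
    (v w : Y) {t : ℝ≥0∞} (ht : t ≠ ⊤) :
    (‖v‖₊ : ℝ≥0∞) * t ≤ (‖t.toReal • v - w‖₊ : ℝ≥0∞) + (‖w‖₊ : ℝ≥0∞) := by
  have h0 : (‖v‖₊ : ℝ≥0∞) * t = (‖t.toReal • v‖₊ : ℝ≥0∞) := by
    rw [← ofReal_norm_eq_coe_nnnorm, ← ofReal_norm_eq_coe_nnnorm, norm_smul,
      Real.norm_of_nonneg ENNReal.toReal_nonneg,
      ENNReal.ofReal_mul ENNReal.toReal_nonneg, ENNReal.ofReal_toReal ht, mul_comm]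
  rw [h0]
  have h1 : ‖t.toReal • v‖₊ ≤ ‖t.toReal • v - w‖₊ + ‖w‖₊ := by
    calc ‖t.toReal • v‖₊ = ‖(t.toReal • v - w) + w‖₊ := by rw [sub_add_cancel]
      _ ≤ _ := nnnorm_add_le _ _
  exact_mod_cast h1

theorem aux_integrable
    {X Y : Type*} [NormedAddCommGroup X] [NormedSpace ℝ X] [FiniteDimensional ℝ X]
    [MeasurableSpace X] [OpensMeasurableSpace X]
    [NormedAddCommGroup Y] [NormedSpace ℝ Y] [CompleteSpace Y]
    (μ : Measure X) [μ.Regular] [μ.IsComplete]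
    (lam : ℝ) (hlam : 1 ≤ lam)
    (𝒮 : Set (X × Set X)) (h𝒮 : IsAEMorseCover μ lam Set.univ 𝒮)
    (G : Set X → Y)
    (M : ENNReal) (hM : M < ⊤)
    (hMsup : ∀ (I : Set ℕ) (T : ℕ → X × Set X), IsExhausting μ Set.univ 𝒮 I T →
      (∑' i : I, (‖G (T i).2‖₊ : ENNReal)) ≤ M)
    (f : X → Y) (hf : MuMeasurable μ f)
    (hriemann : ∀ ε > (0:ℝ), ∃ δ : X → ℝ, (∀ x : X, δ x ∈ Set.Ioc (0:ℝ) 1) ∧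
      ∀ (I : Set ℕ) (T : ℕ → X × Set X), IsExhausting μ Set.univ 𝒮 I T →
        (∀ i ∈ I, (T i).2 ⊆ Metric.closedBall (T i).1 (δ (T i).1)) →
        (∑' i : I, (‖(μ (T i).2).toReal • f (T i).1 - G (T i).2‖₊ : ENNReal)) <
          ENNReal.ofReal ε)
    [Nonempty X] :
    Integrable f μ := by
  classical
  obtain ⟨F, hF⟩ := hf
  have hfm : AEStronglyMeasurable f μ :=
    aestronglyMeasurable_of_tendsto_ae Filter.atTop
      (fun n => (F n).stronglyMeasurable.aestronglyMeasurable) hF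
  set x₀ : X := Classical.arbitrary X with hx₀
  have hSmeas : ∀ p ∈ 𝒮, MeasurableSet p.2 := fun p hp => (h𝒮.1.1 p hp).2.1
  have hSfin : ∀ p ∈ 𝒮, μ p.2 ≠ ⊤ := by
    intro p hp
    obtain ⟨r, hr, hball, hsub, hstar⟩ := (h𝒮.1.1 p hp).1
    exact ((measure_mono hsub).trans_lt (isCompact_closedBall p.1 (lam * r)).measure_lt_top).ne
  have hpackA : ∀ n : ℕ, ∃ (KU : Set X) (I : Set ℕ) (T : ℕ → X × Set X),
      IsExhausting μ Set.univ 𝒮 I T ∧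
      MeasurableSet KU ∧
      μ (Metric.closedBall x₀ n \ KU) ≤ ENNReal.ofReal ((1/2) ^ n) ∧
      (∀ i ∈ I, (T i).1 ∉ KU → (T i).2 ∩ KU = ∅) ∧
      (∀ i ∈ I, (T i).1 ∈ KU → ∀ x ∈ (T i).2 ∩ KU, ‖f x - f ((T i).1)‖ ≤ (1/2) ^ n) ∧
      (∑' (i : I), (‖(μ ((T i).2)).toReal • f ((T i).1) - G ((T i).2)‖₊ : ℝ≥0∞)) ≤
        ENNReal.ofReal ((1/2) ^ n) := by
    intro n
    obtain ⟨δr, hδrIoc, hδrprop⟩ := hriemann ((1/2) ^ n) (by positivity)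
    obtain ⟨J, K, C, hKc, hKsub, hKd, hKe, hKμ, hC0, hKosc, hKC⟩ :=
      aux_lusin μ hfm (measurableSet_closedBall (x := x₀) (ε := (n:ℝ)))
        ((isCompact_closedBall x₀ (n:ℝ)).measure_lt_top).ne
        (by positivity : (0:ℝ) < (1/2)^n) (by positivity : (0:ℝ) < (1/2)^n)
    obtain ⟨I, T, hexh, hfine, hR1, hR2⟩ :=
      aux_core μ lam 𝒮 h𝒮 f K J hKc hKd hKe hKosc one_pos δr hδrIoc
    exact ⟨⋃ j, K j, I, T, hexh,
      (aux_finUnion_closed K J (fun j => (hKc j).isClosed) hKe).measurableSet,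
      hKμ, hR1, fun i hi ha => (hR2 i hi ha).1, (hδrprop I T hexh hfine).le⟩
  choose KUseq Iseq Tseq hexh hKUmeas hKUμ hR1 hR2 hRsum using hpackA
  set φ : ℕ → X → ℝ≥0∞ := fun n x =>
    ∑' (i : (Iseq n)), Set.indicator ((Tseq n (i : ℕ)).2)
      (fun _ => (‖f ((Tseq n (i : ℕ)).1)‖₊ : ℝ≥0∞)) x with hφdef
  have hφmeas : ∀ n, Measurable (φ n) := by
    intro n
    refine Measurable.ennreal_tsum fun i => ?_
    exact Measurable.indicator measurable_const (hSmeas _ ((hexh n).1 _ i.2))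
  have hφint : ∀ n, ∫⁻ x, φ n x ∂μ ≤ ENNReal.ofReal ((1/2) ^ n) + M := by
    intro n
    have h1 : ∫⁻ x, φ n x ∂μ = ∑' (i : (Iseq n)),
        (‖f ((Tseq n (i : ℕ)).1)‖₊ : ℝ≥0∞) * μ ((Tseq n (i : ℕ)).2) := by
      rw [hφdef]
      rw [lintegral_tsum (fun i => (Measurable.indicator measurable_const
        (hSmeas _ ((hexh n).1 _ i.2))).aemeasurable)]
      exact tsum_congr fun i => by
        rw [lintegral_indicator_const (hSmeas _ ((hexh n).1 _ i.2))]
    rw [h1]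
    calc ∑' (i : (Iseq n)), (‖f ((Tseq n (i : ℕ)).1)‖₊ : ℝ≥0∞) * μ ((Tseq n (i : ℕ)).2)
        ≤ ∑' (i : (Iseq n)),
          ((‖(μ ((Tseq n (i : ℕ)).2)).toReal • f ((Tseq n (i : ℕ)).1) -
              G ((Tseq n (i : ℕ)).2)‖₊ : ℝ≥0∞) + (‖G ((Tseq n (i : ℕ)).2)‖₊ : ℝ≥0∞)) := by
          refine ENNReal.tsum_le_tsum fun i => ?_
          exact aux_term_bound _ _ (hSfin _ ((hexh n).1 _ i.2))
      _ = (∑' (i : (Iseq n)), (‖(μ ((Tseq n (i : ℕ)).2)).toReal • f ((Tseq n (i : ℕ)).1) -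
              G ((Tseq n (i : ℕ)).2)‖₊ : ℝ≥0∞)) +
          (∑' (i : (Iseq n)), (‖G ((Tseq n (i : ℕ)).2)‖₊ : ℝ≥0∞)) := ENNReal.tsum_add
      _ ≤ ENNReal.ofReal ((1/2) ^ n) + M :=
          add_le_add (hRsum n) (hMsup (Iseq n) (Tseq n) (hexh n))
  have hcover : ∀ᵐ x ∂μ, ∀ n, x ∈ ⋃ i ∈ Iseq n, (Tseq n i).2 := by
    rw [ae_all_iff]
    intro n
    have h0 := (hexh n).2.2
    rw [ae_iff]
    convert h0 using 2
    ext x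
    simp
  have hBC : μ (Filter.limsup (fun (n : ℕ) => Metric.closedBall x₀ (n:ℝ) \ KUseq n) Filter.atTop)
      = 0 := by
    refine measure_limsup_atTop_eq_zero ?_
    refine ne_top_of_le_ne_top (@ENNReal.ofReal_ne_top (∑' n : ℕ, (1/2:ℝ)^n)) ?_
    calc ∑' n : ℕ, μ (Metric.closedBall x₀ (n:ℝ) \ KUseq n)
        ≤ ∑' n : ℕ, ENNReal.ofReal ((1/2)^n) := ENNReal.tsum_le_tsum fun n => hKUμ n
      _ = ENNReal.ofReal (∑' n : ℕ, (1/2:ℝ)^n) := by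
          rw [ENNReal.ofReal_tsum_of_nonneg (fun n => by positivity)
            (summable_geometric_of_lt_one (by norm_num) (by norm_num))]
  have hae : ∀ᵐ x ∂μ, (‖f x‖₊ : ℝ≥0∞) ≤ Filter.liminf (fun n => φ n x) Filter.atTop := by
    have hnotlimsup : ∀ᵐ x ∂μ,
        x ∉ Filter.limsup (fun (n : ℕ) => Metric.closedBall x₀ (n:ℝ) \ KUseq n) Filter.atTop := by
      rw [ae_iff]
      simpa using hBC
    filter_upwards [hcover, hnotlimsup] with x hx1 hx2
    obtain ⟨m₁, hm₁⟩ := exists_nat_ge (dist x x₀)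
    have hx2' : ∃ N : ℕ, ∀ n : ℕ, n ≥ N → x ∉ Metric.closedBall x₀ (n:ℝ) \ KUseq n := by
      by_contra hcon
      push_neg at hcon
      apply hx2
      rw [Filter.limsup_eq_iInf_iSup_of_nat]
      simp only [Set.iInf_eq_iInter, Set.iSup_eq_iUnion, Set.mem_iInter, Set.mem_iUnion]
      intro N
      obtain ⟨n, hn1, hn2⟩ := hcon N
      exact ⟨n, hn1, hn2⟩
    obtain ⟨N, hN⟩ := hx2'
    have hev : ∀ᶠ n in Filter.atTop, ENNReal.ofReal (‖f x‖ - (1/2)^n) ≤ φ n x := by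
      filter_upwards [Filter.eventually_ge_atTop (m₁ : ℕ), Filter.eventually_ge_atTop (N : ℕ)]
        with n h1 h2
      have hxball : x ∈ Metric.closedBall x₀ (n:ℝ) :=
        Metric.mem_closedBall.2 (hm₁.trans (Nat.cast_le.2 h1))
      have hxKU : x ∈ KUseq n := by
        by_contra h
        exact hN n h2 ⟨hxball, h⟩
      obtain ⟨i, hiI, hxi⟩ : ∃ i ∈ Iseq n, x ∈ (Tseq n i).2 := by
        simpa using hx1 n
      have htag : (Tseq n i).1 ∈ KUseq n := by
        by_contra h
        have hempty := hR1 n i hiI h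
        rw [Set.eq_empty_iff_forall_notMem] at hempty
        exact hempty x ⟨hxi, hxKU⟩
      have hoscx := hR2 n i hiI htag x ⟨hxi, hxKU⟩
      have hnorm : ‖f x‖ - (1/2)^n ≤ ‖f ((Tseq n i).1)‖ := by
        have := norm_sub_norm_le (f x) (f ((Tseq n i).1))
        linarith
      have hterm : (‖f ((Tseq n i).1)‖₊ : ℝ≥0∞) ≤ φ n x := by
        have hle := ENNReal.le_tsum (a := (⟨i, hiI⟩ : (Iseq n)))
          (f := fun (j : (Iseq n)) => Set.indicator ((Tseq n (j : ℕ)).2)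
            (fun _ => (‖f ((Tseq n (j : ℕ)).1)‖₊ : ℝ≥0∞)) x)
        rw [hφdef]
        simpa [Set.indicator_of_mem hxi] using hle
      refine le_trans ?_ hterm
      rw [← ofReal_norm_eq_coe_nnnorm]
      exact ENNReal.ofReal_le_ofReal hnorm
    have htends : Filter.Tendsto (fun n : ℕ => ENNReal.ofReal (‖f x‖ - (1/2)^n))
        Filter.atTop (nhds (ENNReal.ofReal ‖f x‖)) := by
      refine ENNReal.tendsto_ofReal ?_
      have h0 : Filter.Tendsto (fun n : ℕ => (1/2:ℝ)^n) Filter.atTop (nhds 0) :=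
        tendsto_pow_atTop_nhds_zero_of_lt_one (by norm_num) (by norm_num)
      simpa using tendsto_const_nhds.sub h0
    calc (‖f x‖₊ : ℝ≥0∞) = ENNReal.ofReal ‖f x‖ := (ofReal_norm_eq_coe_nnnorm _).symm
      _ = Filter.liminf (fun n : ℕ => ENNReal.ofReal (‖f x‖ - (1/2)^n)) Filter.atTop :=
          htends.liminf_eq.symm
      _ ≤ Filter.liminf (fun n => φ n x) Filter.atTop := Filter.liminf_le_liminf hev
  have hfin : ∫⁻ x, (‖f x‖₊ : ℝ≥0∞) ∂μ < ⊤ := by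
    have hbound : Filter.liminf (fun n => ∫⁻ x, φ n x ∂μ) Filter.atTop ≤ M := by
      have htendsM : Filter.Tendsto (fun n : ℕ => ENNReal.ofReal ((1/2)^n) + M)
          Filter.atTop (nhds (0 + M)) := by
        refine Filter.Tendsto.add_const M ?_
        rw [← ENNReal.ofReal_zero]
        refine ENNReal.tendsto_ofReal ?_
        exact tendsto_pow_atTop_nhds_zero_of_lt_one (by norm_num) (by norm_num)
      rw [zero_add] at htendsM
      calc Filter.liminf (fun n => ∫⁻ x, φ n x ∂μ) Filter.atTop
          ≤ Filter.liminf (fun n : ℕ => ENNReal.ofReal ((1/2)^n) + M) Filter.atTop :=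
            Filter.liminf_le_liminf (Filter.Eventually.of_forall hφint)
        _ = M := htendsM.liminf_eq
    calc ∫⁻ x, (‖f x‖₊ : ℝ≥0∞) ∂μ
        ≤ ∫⁻ x, Filter.liminf (fun n => φ n x) Filter.atTop ∂μ := lintegral_mono_ae hae
      _ ≤ Filter.liminf (fun n => ∫⁻ x, φ n x ∂μ) Filter.atTop := lintegral_liminf_le hφmeas
      _ ≤ M := hbound
      _ < ⊤ := hM
  exact ⟨hfm, hfin⟩

theorem aux_integral_eq
    {X Y : Type*} [NormedAddCommGroup X] [NormedSpace ℝ X] [FiniteDimensional ℝ X]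
    [MeasurableSpace X] [OpensMeasurableSpace X]
    [NormedAddCommGroup Y] [NormedSpace ℝ Y] [CompleteSpace Y]
    (μ : Measure X) [μ.Regular] [μ.IsComplete]
    (lam : ℝ) (hlam : 1 ≤ lam)
    (𝒮 : Set (X × Set X)) (h𝒮 : IsAEMorseCover μ lam Set.univ 𝒮)
    (G : Set X → Y)
    (hG0 : G ∅ = 0)
    (hGadd : AuxGAdd G)
    (hGnull : ∀ E : Set X, MeasurableSet E → μ E = 0 → G E = 0)
    (f : X → Y) (hInt : Integrable f μ)
    (hriemann : ∀ ε > (0:ℝ), ∃ δ : X → ℝ, (∀ x : X, δ x ∈ Set.Ioc (0:ℝ) 1) ∧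
      ∀ (I : Set ℕ) (T : ℕ → X × Set X), IsExhausting μ Set.univ 𝒮 I T →
        (∀ i ∈ I, (T i).2 ⊆ Metric.closedBall (T i).1 (δ (T i).1)) →
        (∑' i : I, (‖(μ (T i).2).toReal • f (T i).1 - G (T i).2‖₊ : ENNReal)) <
          ENNReal.ofReal ε)
    [Nonempty X] :
    ∫ x, f x ∂μ = G Set.univ := by
  classical
  set x₀ : X := Classical.arbitrary X with hx₀
  have hSmeas : ∀ p ∈ 𝒮, MeasurableSet p.2 := fun p hp => (h𝒮.1.1 p hp).2.1
  have hSfin : ∀ p ∈ 𝒮, μ p.2 ≠ ⊤ := by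
    intro p hp
    obtain ⟨r, hr, hball, hsub, hstar⟩ := (h𝒮.1.1 p hp).1
    exact ((measure_mono hsub).trans_lt (isCompact_closedBall p.1 (lam * r)).measure_lt_top).ne
  set A : ℕ → Set X := fun m => Metric.closedBall x₀ (m:ℝ) with hAdef
  have hAmono : Monotone A :=
    fun a b hab => Metric.closedBall_subset_closedBall (Nat.cast_le.2 hab)
  have hAmeas : ∀ m, MeasurableSet (A m) := fun m => measurableSet_closedBall
  have hAunion : (⋃ m, A m) = Set.univ := by
    ext x
    simp only [Set.mem_iUnion, Set.mem_univ, iff_true]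
    obtain ⟨m, hm⟩ := exists_nat_ge (dist x x₀)
    exact ⟨m, Metric.mem_closedBall.2 hm⟩
  have hKey : ∀ ε : ℝ, 0 < ε → ‖(∫ x, f x ∂μ) - G Set.univ‖ ≤ 8 * ε := by
    intro ε hε
    obtain ⟨m₁, hm₁⟩ := aux_G_vanish G hG0 hGadd hAmono hAmeas hAunion hε
    have hgE : ∫⁻ x, (‖f x‖₊ : ℝ≥0∞) ∂μ ≠ ⊤ := hInt.2.ne
    obtain ⟨m₂, hm₂⟩ : ∃ m₂ : ℕ, ∫⁻ x in (A m₂)ᶜ, (‖f x‖₊ : ℝ≥0∞) ∂μ ≤ ENNReal.ofReal ε := by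
      set L := ∫⁻ x, (‖f x‖₊ : ℝ≥0∞) ∂μ with hLdef
      have htpart : Filter.Tendsto (fun m => ∫⁻ x in A m, (‖f x‖₊:ℝ≥0∞) ∂μ)
          Filter.atTop (nhds L) := by
        have h2 := lintegral_tendsto_of_tendsto_of_monotone
          (f := fun m => Set.indicator (A m) (fun x => (‖f x‖₊:ℝ≥0∞)))
          (F := fun x => (‖f x‖₊ : ℝ≥0∞)) (μ := μ)
          (fun m => (hInt.1.enorm.indicator (hAmeas m)))
          (Filter.Eventually.of_forall fun x a b hab =>
            Set.indicator_le_indicator_of_subset (hAmono hab) (fun _ => zero_le) x)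
          (Filter.Eventually.of_forall fun x => ?_)
        · refine Filter.Tendsto.congr (fun m => ?_) h2
          exact lintegral_indicator (hAmeas m) _
        · have hx : x ∈ ⋃ m, A m := by rw [hAunion]; trivial
          obtain ⟨m₀, hm₀⟩ := Set.mem_iUnion.1 hx
          refine tendsto_atTop_of_eventually_const (i₀ := m₀) fun m hm => ?_
          exact Set.indicator_of_mem (hAmono hm hm₀) _
      by_cases hL0 : L = 0
      · refine ⟨0, ?_⟩
        have hle : ∫⁻ x in (A 0)ᶜ, (‖f x‖₊:ℝ≥0∞) ∂μ ≤ L :=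
          setLIntegral_le_lintegral _ _
        rw [hL0] at hle
        exact hle.trans (zero_le)
      · have hlt : L - ENNReal.ofReal ε < L :=
          ENNReal.sub_lt_self hgE hL0 (ne_of_gt (ENNReal.ofReal_pos.2 hε))
        have hev : ∀ᶠ m in Filter.atTop,
            L - ENNReal.ofReal ε < ∫⁻ x in A m, (‖f x‖₊:ℝ≥0∞) ∂μ :=
          htpart.eventually (eventually_gt_nhds hlt)
        obtain ⟨m, hm⟩ := hev.exists
        refine ⟨m, ?_⟩
        have hadd := lintegral_add_compl (fun x => (‖f x‖₊:ℝ≥0∞)) (hAmeas m) (μ := μ)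
        have hfinA : ∫⁻ x in A m, (‖f x‖₊:ℝ≥0∞) ∂μ ≠ ⊤ :=
          ne_top_of_le_ne_top hgE (setLIntegral_le_lintegral _ _)
        have hLle : L ≤ (∫⁻ x in A m, (‖f x‖₊:ℝ≥0∞) ∂μ) + ENNReal.ofReal ε := by
          calc L ≤ (L - ENNReal.ofReal ε) + ENNReal.ofReal ε := le_tsub_add
            _ ≤ _ := add_le_add_left hm.le _
        have h2 : (∫⁻ x in A m, (‖f x‖₊:ℝ≥0∞) ∂μ) + (∫⁻ x in (A m)ᶜ, (‖f x‖₊:ℝ≥0∞) ∂μ)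
            ≤ (∫⁻ x in A m, (‖f x‖₊:ℝ≥0∞) ∂μ) + ENNReal.ofReal ε := by
          rw [hadd]; exact hLle
        exact (ENNReal.add_le_add_iff_left hfinA).1 h2
    obtain ⟨δG, hδGpos, hδG⟩ := aux_G_abscont μ G hG0 hGadd hGnull hε
    obtain ⟨δf, hδfpos, hδf⟩ := exists_pos_setLIntegral_lt_of_measure_lt hgE
      (ne_of_gt (ENNReal.ofReal_pos.2 hε))
    set δf2 : ℝ := (min δf 1).toReal / 2 with hδf2def
    have hminpos : 0 < min δf 1 := lt_min hδfpos zero_lt_one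
    have hminne : min δf 1 ≠ ⊤ := ne_top_of_le_ne_top ENNReal.one_ne_top (min_le_right _ _)
    have htRpos : 0 < (min δf 1).toReal := ENNReal.toReal_pos hminpos.ne' hminne
    have hδf2pos : 0 < δf2 := by rw [hδf2def]; linarith
    have hδf2lt : ENNReal.ofReal δf2 < δf := by
      have h1 : ENNReal.ofReal δf2 < ENNReal.ofReal ((min δf 1).toReal) := by
        rw [ENNReal.ofReal_lt_ofReal_iff htRpos, hδf2def]
        linarith
      rw [ENNReal.ofReal_toReal hminne] at h1
      exact h1.trans_le (min_le_left _ _)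
    set m₀ : ℕ := max m₁ m₂ with hm₀def
    set Am : Set X := Metric.closedBall x₀ (m₀:ℝ) with hAmdef
    have hAmA : Am = A m₀ := rfl
    have hAmmeas : MeasurableSet Am := measurableSet_closedBall
    have hAmfin : μ Am ≠ ⊤ := (isCompact_closedBall _ _).measure_lt_top.ne
    set Bigμ : ℝ := (μ (Metric.closedBall x₀ ((m₀:ℝ)+2))).toReal with hBigdef
    have hBignn : 0 ≤ Bigμ := ENNReal.toReal_nonneg
    set η : ℝ := ε / (Bigμ + 1) with hηdef
    have hηpos : 0 < η := by rw [hηdef]; positivity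
    set θ : ℝ := min δG δf2 with hθdef
    have hθpos : 0 < θ := lt_min hδGpos hδf2pos
    obtain ⟨J, K, C, hKc, hKsub, hKd, hKe, hKμ, hC0, hKosc, hKC⟩ :=
      aux_lusin μ hInt.aestronglyMeasurable hAmmeas hAmfin hηpos hθpos
    set KU : Set X := ⋃ j, K j with hKUdef
    have hKUclosed : IsClosed KU := aux_finUnion_closed K J (fun j => (hKc j).isClosed) hKe
    have hKUmeas : MeasurableSet KU := hKUclosed.measurableSet
    have hKUsub : KU ⊆ Am := Set.iUnion_subset hKsub
    have hC1pos : (0:ℝ) < C + 1 := by linarith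
    -- choose ω
    obtain ⟨ω, hωpos, hω1, hωμ⟩ : ∃ ω : ℝ, 0 < ω ∧ ω ≤ 1 ∧ (KU.Nonempty →
        μ (({y | Metric.infDist y KU ≤ ω} ∩ Metric.closedBall x₀ ((m₀:ℝ)+2)) \ KU)
          ≤ ENNReal.ofReal (min δf2 (ε / (C+1)))) := by
      by_cases hKUne : KU.Nonempty
      · set Z : ℕ → Set X := fun k =>
          ({y | Metric.infDist y KU ≤ 1/((k:ℝ)+1)} ∩ Metric.closedBall x₀ ((m₀:ℝ)+2)) \ KU
          with hZdef
        have hZmeas : ∀ k, MeasurableSet (Z k) := by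
          intro k
          refine (MeasurableSet.inter ?_ measurableSet_closedBall).diff hKUmeas
          exact (isClosed_le (continuous_infDist_pt KU) continuous_const).measurableSet
        have hZanti : Antitone Z := by
          intro a b hab
          refine Set.diff_subset_diff_left (Set.inter_subset_inter_left _ ?_)
          intro y hy
          simp only [Set.mem_setOf_eq] at hy ⊢
          refine le_trans hy ?_
          have hba : ((a:ℝ)+1) ≤ ((b:ℝ)+1) := by
            have h := (Nat.cast_le (α := ℝ)).2 hab
            linarith
          exact one_div_le_one_div_of_le (by positivity) hba
        have hZfin : μ (Z 0) ≠ ⊤ :=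
          ((measure_mono (Set.diff_subset.trans Set.inter_subset_right)).trans_lt
            (isCompact_closedBall _ _).measure_lt_top).ne
        have hZiInter : (⋂ k, Z k) = ∅ := by
          rw [Set.eq_empty_iff_forall_notMem]
          intro y hy
          have h1 : ∀ k : ℕ, Metric.infDist y KU ≤ 1/((k:ℝ)+1) :=
            fun k => ((Set.mem_iInter.1 hy k).1).1
          have h2 : y ∉ KU := (Set.mem_iInter.1 hy 0).2
          have ht : Filter.Tendsto (fun k : ℕ => 1/((k:ℝ)+1)) Filter.atTop (nhds 0) :=
            tendsto_one_div_add_atTop_nhds_zero_nat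
          have h3 : Metric.infDist y KU ≤ 0 :=
            ge_of_tendsto ht (Filter.Eventually.of_forall h1)
          have h4 : Metric.infDist y KU = 0 := le_antisymm h3 Metric.infDist_nonneg
          exact h2 ((hKUclosed.mem_iff_infDist_zero hKUne).2 h4)
        have htendZ := MeasureTheory.tendsto_measure_iInter_atTop
          (fun k => (hZmeas k).nullMeasurableSet) hZanti ⟨0, hZfin⟩
        rw [hZiInter] at htendZ
        simp only [measure_empty] at htendZ
        have hevZ : ∀ᶠ k in Filter.atTop,
            μ (Z k) < ENNReal.ofReal (min δf2 (ε/(C+1))) :=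
          htendZ.eventually (eventually_lt_nhds
            (ENNReal.ofReal_pos.2 (lt_min hδf2pos (by positivity))))
        obtain ⟨k, hk⟩ := hevZ.exists
        refine ⟨1/((k:ℝ)+1), by positivity, ?_, fun _ => hk.le⟩
        rw [div_le_one (by positivity)]
        have : (0:ℝ) ≤ (k:ℝ) := Nat.cast_nonneg k
        linarith
      · exact ⟨1, one_pos, le_refl 1, fun h => absurd h hKUne⟩
    obtain ⟨δr, hδrIoc, hδrprop⟩ := hriemann ε hε
    obtain ⟨I, T, hexh, hfine, hR1, hR2⟩ :=
      aux_core μ lam 𝒮 h𝒮 f K J hKc hKd hKe hKosc hωpos δr hδrIoc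
    have hRsum := (hδrprop I T hexh hfine).le
    set s : ℕ → Set X := fun k => if k ∈ I ∧ (T k).1 ∈ KU then (T k).2 else ∅ with hsdef
    have hsmeas : ∀ k, MeasurableSet (s k) := by
      intro k
      simp only [hsdef]
      split_ifs with h
      · exact hSmeas _ (hexh.1 _ h.1)
      · exact MeasurableSet.empty
    have hsfin : ∀ k, μ (s k) ≠ ⊤ := by
      intro k
      simp only [hsdef]
      split_ifs with h
      · exact hSfin _ (hexh.1 _ h.1)
      · simp
    have hsdisj : ∀ i j, i ≠ j → Disjoint (s i) (s j) := by
      intro i j hij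
      simp only [hsdef]
      split_ifs with h1 h2 h2
      · exact hexh.2.1 i h1.1 j h2.1 hij
      all_goals simp
    set V : Set X := ⋃ k, s k with hVdef
    have hVmeas : MeasurableSet V := MeasurableSet.iUnion hsmeas
    set Zb : Set X := {y | Metric.infDist y KU ≤ ω} ∩ Metric.closedBall x₀ ((m₀:ℝ)+2)
      with hZbdef
    have hZbmeas : MeasurableSet Zb :=
      ((isClosed_le (continuous_infDist_pt KU) continuous_const).measurableSet).inter
        measurableSet_closedBall
    have hZbfin : μ Zb ≠ ⊤ :=
      ((measure_mono Set.inter_subset_right).trans_lt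
        (isCompact_closedBall _ _).measure_lt_top).ne
    have hsZb : ∀ k, s k ⊆ Zb := by
      intro k
      simp only [hsdef]
      split_ifs with h
      · rcases h with ⟨hkI, hkKU⟩
        intro x hx
        refine ⟨(hR2 k hkI hkKU).2 x hx, ?_⟩
        have h1 : dist x ((T k).1) ≤ δr ((T k).1) := Metric.mem_closedBall.1 (hfine k hkI hx)
        have h2 : δr ((T k).1) ≤ 1 := (hδrIoc _).2
        have h3 : dist ((T k).1) x₀ ≤ (m₀:ℝ) := Metric.mem_closedBall.1 (hKUsub hkKU)
        refine Metric.mem_closedBall.2 ?_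
        calc dist x x₀ ≤ dist x ((T k).1) + dist ((T k).1) x₀ := dist_triangle _ _ _
          _ ≤ 1 + (m₀:ℝ) := add_le_add (h1.trans h2) h3
          _ ≤ (m₀:ℝ) + 2 := by linarith
      · exact Set.empty_subset _
    have hZbBig : (μ Zb).toReal ≤ Bigμ :=
      ENNReal.toReal_mono (isCompact_closedBall _ _).measure_lt_top.ne
        (measure_mono Set.inter_subset_right)
    have hGV : Filter.Tendsto (fun n => ∑ k ∈ Finset.range n, G (s k)) Filter.atTop
        (nhds (G V)) := hGadd s hsmeas hsdisj
    have hIV : HasSum (fun k => ∫ x in s k, f x ∂μ) (∫ x in V, f x ∂μ) :=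
      hasSum_integral_iUnion hsmeas (fun i j hij => hsdisj i j hij) hInt.integrableOn
    have hdiff : Filter.Tendsto
        (fun n => ∑ k ∈ Finset.range n, ((∫ x in s k, f x ∂μ) - G (s k))) Filter.atTop
        (nhds ((∫ x in V, f x ∂μ) - G V)) := by
      simpa [Finset.sum_sub_distrib] using hIV.tendsto_sum_nat.sub hGV
    have hBsum : ∀ n : ℕ, ∑ k ∈ Finset.range n,
        ‖(μ (s k)).toReal • f ((T k).1) - G (s k)‖ ≤ ε := by
      intro n
      have hle1 : ∀ k, (‖(μ (s k)).toReal • f ((T k).1) - G (s k)‖₊ : ℝ≥0∞) ≤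
          Set.indicator I (fun k =>
            (‖(μ ((T k).2)).toReal • f ((T k).1) - G ((T k).2)‖₊ : ℝ≥0∞)) k := by
        intro k
        by_cases hk : k ∈ I ∧ (T k).1 ∈ KU
        · have hsk : s k = (T k).2 := if_pos hk
          rw [hsk, Set.indicator_of_mem hk.1]
        · have h0 : s k = ∅ := if_neg hk
          rw [h0]
          simp [hG0]
      have hle2 : (∑ k ∈ Finset.range n,
          (‖(μ (s k)).toReal • f ((T k).1) - G (s k)‖₊ : ℝ≥0∞)) ≤ ENNReal.ofReal ε := by
        calc (∑ k ∈ Finset.range n, (‖(μ (s k)).toReal • f ((T k).1) - G (s k)‖₊ : ℝ≥0∞))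
            ≤ ∑ k ∈ Finset.range n, Set.indicator I (fun k =>
                (‖(μ ((T k).2)).toReal • f ((T k).1) - G ((T k).2)‖₊ : ℝ≥0∞)) k :=
              Finset.sum_le_sum (fun k _ => hle1 k)
          _ ≤ ∑' k : ℕ, Set.indicator I (fun k =>
                (‖(μ ((T k).2)).toReal • f ((T k).1) - G ((T k).2)‖₊ : ℝ≥0∞)) k :=
              ENNReal.sum_le_tsum _
          _ = ∑' (i : I), (‖(μ ((T (i:ℕ)).2)).toReal • f ((T (i:ℕ)).1) -
                G ((T (i:ℕ)).2)‖₊ : ℝ≥0∞) := (tsum_subtype I _).symm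
          _ ≤ ENNReal.ofReal ε := hRsum
      have hmono := ENNReal.toReal_mono (ENNReal.ofReal_ne_top) hle2
      rw [ENNReal.toReal_ofReal hε.le] at hmono
      refine le_trans (le_of_eq ?_) hmono
      rw [ENNReal.toReal_sum (fun k _ => ENNReal.coe_ne_top)]
      simp [coe_nnnorm]
    -- first-sum bound
    have hAsum : ∀ n : ℕ, ∑ k ∈ Finset.range n,
        ‖(∫ x in s k, f x ∂μ) - (μ (s k)).toReal • f ((T k).1)‖ ≤ 3 * ε := by
      intro n
      by_cases hKUne : KU.Nonempty
      · have hZμ := hωμ hKUne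
        have hk_bound : ∀ k, ‖(∫ x in s k, f x ∂μ) - (μ (s k)).toReal • f ((T k).1)‖ ≤
            η * (μ (s k)).toReal + ((∫ x in s k \ KU, ‖f x‖ ∂μ) +
              C * (μ (s k \ KU)).toReal) := by
          intro k
          by_cases hk : k ∈ I ∧ (T k).1 ∈ KU
          · have hsk : s k = (T k).2 := if_pos hk
            have hSm : MeasurableSet (s k) := hsmeas k
            have hSfink : μ (s k) ≠ ⊤ := hsfin k
            have hIOn : IntegrableOn f (s k) μ := hInt.integrableOn
            have hconstInt : IntegrableOn (fun _ => f ((T k).1)) (s k) μ :=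
              integrableOn_const hSfink
            have heq1 : (∫ x in s k, f x ∂μ) - (μ (s k)).toReal • f ((T k).1)
                = ∫ x in s k, (f x - f ((T k).1)) ∂μ := by
              rw [integral_sub hIOn hconstInt, setIntegral_const, measureReal_def]
            have hgInt : IntegrableOn (fun x => ‖f x - f ((T k).1)‖) (s k) μ :=
              (hIOn.sub hconstInt).norm
            have hdisj2 : Disjoint (s k ∩ KU) (s k \ KU) :=
              disjoint_sdiff_self_right.mono_left Set.inter_subset_right
            have hsplitInt : ∫ x in s k, ‖f x - f ((T k).1)‖ ∂μ =
                (∫ x in s k ∩ KU, ‖f x - f ((T k).1)‖ ∂μ) +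
                (∫ x in s k \ KU, ‖f x - f ((T k).1)‖ ∂μ) := by
              rw [← setIntegral_union hdisj2 (hSm.diff hKUmeas)
                (hgInt.mono_set Set.inter_subset_left)
                (hgInt.mono_set Set.diff_subset), Set.inter_union_diff]
            have hb1 : ∫ x in s k ∩ KU, ‖f x - f ((T k).1)‖ ∂μ
                ≤ η * (μ (s k)).toReal := by
              have hboundpt : ∀ x ∈ s k ∩ KU, ‖f x - f ((T k).1)‖ ≤ η := by
                intro x hx
                refine (hR2 k hk.1 hk.2).1 x ?_
                rw [← hsk]
                exact hx
              calc ∫ x in s k ∩ KU, ‖f x - f ((T k).1)‖ ∂μ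
                  ≤ ∫ _x in s k ∩ KU, η ∂μ :=
                    setIntegral_mono_on (hgInt.mono_set Set.inter_subset_left)
                      (integrableOn_const ((measure_mono Set.inter_subset_left).trans_lt
                        (lt_top_iff_ne_top.2 hSfink)).ne)
                      (hSm.inter hKUmeas) hboundpt
                _ = (μ (s k ∩ KU)).toReal * η := by rw [setIntegral_const, measureReal_def, smul_eq_mul]
                _ ≤ (μ (s k)).toReal * η := by
                    refine mul_le_mul_of_nonneg_right ?_ hηpos.le
                    exact ENNReal.toReal_mono hSfink (measure_mono Set.inter_subset_left)
                _ = η * (μ (s k)).toReal := mul_comm _ _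
            have hfinDiff : μ (s k \ KU) ≠ ⊤ :=
              ((measure_mono Set.diff_subset).trans_lt (lt_top_iff_ne_top.2 hSfink)).ne
            have hb2 : ∫ x in s k \ KU, ‖f x - f ((T k).1)‖ ∂μ ≤
                (∫ x in s k \ KU, ‖f x‖ ∂μ) + C * (μ (s k \ KU)).toReal := by
              have hCk : ‖f ((T k).1)‖ ≤ C := by
                obtain ⟨j, hj⟩ := Set.mem_iUnion.1 hk.2
                exact hKC j _ hj
              have hboundpt : ∀ x ∈ s k \ KU, ‖f x - f ((T k).1)‖ ≤ ‖f x‖ + C := by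
                intro x _
                calc ‖f x - f ((T k).1)‖ ≤ ‖f x‖ + ‖f ((T k).1)‖ := norm_sub_le _ _
                  _ ≤ ‖f x‖ + C := by linarith
              have hmeasdiff : MeasurableSet (s k \ KU) := hSm.diff hKUmeas
              have hCint : IntegrableOn (fun _ => C) (s k \ KU) μ :=
                integrableOn_const hfinDiff
              have hint2 : IntegrableOn (fun x => ‖f x‖ + C) (s k \ KU) μ :=
                (hInt.norm.integrableOn).add hCint
              calc ∫ x in s k \ KU, ‖f x - f ((T k).1)‖ ∂μ
                  ≤ ∫ x in s k \ KU, (‖f x‖ + C) ∂μ :=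
                    setIntegral_mono_on (hgInt.mono_set Set.diff_subset) hint2
                      hmeasdiff hboundpt
                _ = (∫ x in s k \ KU, ‖f x‖ ∂μ) + (μ (s k \ KU)).toReal * C := by
                    rw [integral_add (hInt.norm.integrableOn) hCint, setIntegral_const,
                      measureReal_def, smul_eq_mul]
                _ = _ := by ring
            calc ‖(∫ x in s k, f x ∂μ) - (μ (s k)).toReal • f ((T k).1)‖
                = ‖∫ x in s k, (f x - f ((T k).1)) ∂μ‖ := by rw [heq1]
              _ ≤ ∫ x in s k, ‖f x - f ((T k).1)‖ ∂μ := norm_integral_le_integral_norm _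
              _ = _ := hsplitInt
              _ ≤ η * (μ (s k)).toReal + ((∫ x in s k \ KU, ‖f x‖ ∂μ) +
                  C * (μ (s k \ KU)).toReal) := by
                  have := add_le_add hb1 hb2
                  linarith
          · have hsk : s k = ∅ := if_neg hk
            rw [hsk]
            simp
      -- summations
        have hterm_fin : ∀ k, μ (s k \ KU) ≠ ⊤ :=
          fun k => ((measure_mono Set.diff_subset).trans_lt
            (lt_top_iff_ne_top.2 (hsfin k))).ne
        have hsum1 : ∑ k ∈ Finset.range n, (μ (s k)).toReal ≤ (μ Zb).toReal := by
          have hunion : μ (⋃ k ∈ Finset.range n, s k) = ∑ k ∈ Finset.range n, μ (s k) := by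
            refine measure_biUnion_finset ?_ (fun k _ => hsmeas k)
            intro i _ j _ hij
            exact hsdisj i j hij
          calc ∑ k ∈ Finset.range n, (μ (s k)).toReal
              = (∑ k ∈ Finset.range n, μ (s k)).toReal :=
                (ENNReal.toReal_sum (fun k _ => hsfin k)).symm
            _ = (μ (⋃ k ∈ Finset.range n, s k)).toReal := by rw [hunion]
            _ ≤ (μ Zb).toReal :=
                ENNReal.toReal_mono hZbfin
                  (measure_mono (Set.iUnion₂_subset fun k _ => hsZb k))
        have hZKU : μ (Zb \ KU) ≤ ENNReal.ofReal (min δf2 (ε/(C+1))) := hZμ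
        have hsum2 : ∑ k ∈ Finset.range n, ∫ x in s k \ KU, ‖f x‖ ∂μ ≤ ε := by
          have hsum2' : (∑ k ∈ Finset.range n, ∫⁻ x in s k \ KU, (‖f x‖₊ : ℝ≥0∞) ∂μ)
              ≤ ENNReal.ofReal ε := by
            have hequ : ∑ k ∈ Finset.range n, ∫⁻ x in s k \ KU, (‖f x‖₊:ℝ≥0∞) ∂μ
                = ∫⁻ x in ⋃ k ∈ Finset.range n, (s k \ KU), (‖f x‖₊:ℝ≥0∞) ∂μ := by
              rw [lintegral_biUnion_finset ?_ (fun k _ => (hsmeas k).diff hKUmeas)]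
              intro i _ j _ hij
              exact (hsdisj i j hij).mono Set.diff_subset Set.diff_subset
            rw [hequ]
            refine le_trans (lintegral_mono_set
              (Set.iUnion₂_subset fun k _ => Set.diff_subset_diff_left (hsZb k))) ?_
            refine (hδf _ ?_).le
            calc μ (Zb \ KU) ≤ ENNReal.ofReal (min δf2 (ε/(C+1))) := hZKU
              _ ≤ ENNReal.ofReal δf2 := ENNReal.ofReal_le_ofReal (min_le_left _ _)
              _ < δf := hδf2lt
          have hptk : ∀ k, ∫ x in s k \ KU, ‖f x‖ ∂μ
              = (∫⁻ x in s k \ KU, (‖f x‖₊ : ℝ≥0∞) ∂μ).toReal := by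
            intro k
            rw [integral_norm_eq_lintegral_enorm (hInt.1.restrict)]
            rfl
          have htermfin : ∀ k ∈ Finset.range n,
              ∫⁻ x in s k \ KU, (‖f x‖₊:ℝ≥0∞) ∂μ ≠ ⊤ :=
            fun k _ => ne_top_of_le_ne_top hgE (setLIntegral_le_lintegral _ _)
          calc ∑ k ∈ Finset.range n, ∫ x in s k \ KU, ‖f x‖ ∂μ
              = ∑ k ∈ Finset.range n, (∫⁻ x in s k \ KU, (‖f x‖₊:ℝ≥0∞) ∂μ).toReal :=
                Finset.sum_congr rfl (fun k _ => hptk k)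
            _ = (∑ k ∈ Finset.range n, ∫⁻ x in s k \ KU, (‖f x‖₊:ℝ≥0∞) ∂μ).toReal :=
                (ENNReal.toReal_sum htermfin).symm
            _ ≤ (ENNReal.ofReal ε).toReal :=
                ENNReal.toReal_mono ENNReal.ofReal_ne_top hsum2'
            _ = ε := ENNReal.toReal_ofReal hε.le
        have hsum3 : ∑ k ∈ Finset.range n, (μ (s k \ KU)).toReal ≤ ε / (C+1) := by
          have hunion : μ (⋃ k ∈ Finset.range n, (s k \ KU))
              = ∑ k ∈ Finset.range n, μ (s k \ KU) := by
            refine measure_biUnion_finset ?_ (fun k _ => (hsmeas k).diff hKUmeas)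
            intro i _ j _ hij
            exact (hsdisj i j hij).mono Set.diff_subset Set.diff_subset
          calc ∑ k ∈ Finset.range n, (μ (s k \ KU)).toReal
              = (∑ k ∈ Finset.range n, μ (s k \ KU)).toReal :=
                (ENNReal.toReal_sum (fun k _ => hterm_fin k)).symm
            _ = (μ (⋃ k ∈ Finset.range n, (s k \ KU))).toReal := by rw [hunion]
            _ ≤ (ENNReal.ofReal (min δf2 (ε/(C+1)))).toReal := by
                refine ENNReal.toReal_mono ENNReal.ofReal_ne_top ?_
                refine le_trans (measure_mono ?_) hZKU
                exact Set.iUnion₂_subset fun k _ => Set.diff_subset_diff_left (hsZb k)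
            _ ≤ ε / (C+1) := by
                rw [ENNReal.toReal_ofReal (le_min hδf2pos.le (by positivity))]
                exact min_le_right _ _
        calc ∑ k ∈ Finset.range n, ‖(∫ x in s k, f x ∂μ) - (μ (s k)).toReal • f ((T k).1)‖
            ≤ ∑ k ∈ Finset.range n, (η * (μ (s k)).toReal +
                ((∫ x in s k \ KU, ‖f x‖ ∂μ) + C * (μ (s k \ KU)).toReal)) :=
              Finset.sum_le_sum fun k _ => hk_bound k
          _ = η * (∑ k ∈ Finset.range n, (μ (s k)).toReal) +
              ((∑ k ∈ Finset.range n, ∫ x in s k \ KU, ‖f x‖ ∂μ) +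
               C * (∑ k ∈ Finset.range n, (μ (s k \ KU)).toReal)) := by
              rw [Finset.sum_add_distrib, Finset.sum_add_distrib, Finset.mul_sum,
                Finset.mul_sum]
          _ ≤ η * Bigμ + (ε + C * (ε/(C+1))) := by
              refine add_le_add (mul_le_mul_of_nonneg_left (hsum1.trans hZbBig) hηpos.le)
                (add_le_add hsum2 (mul_le_mul_of_nonneg_left hsum3 hC0))
          _ ≤ ε + (ε + ε) := by
              refine add_le_add ?_ (add_le_add le_rfl ?_)
              · rw [hηdef]
                rw [div_mul_eq_mul_div, div_le_iff₀ (by positivity)]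
                nlinarith
              · rw [mul_div_assoc']
                rw [div_le_iff₀ hC1pos]
                nlinarith
          _ = 3 * ε := by ring
      · have hallempty : ∀ k, s k = ∅ := by
          intro k
          simp only [hsdef]
          rw [if_neg]
          rintro ⟨_, htag⟩
          exact hKUne ⟨_, htag⟩
        have hz : ∀ k ∈ Finset.range n,
            ‖(∫ x in s k, f x ∂μ) - (μ (s k)).toReal • f ((T k).1)‖ = 0 := by
          intro k _
          rw [hallempty k]
          simp
        rw [Finset.sum_congr rfl hz]
        simp
        positivity
    have hVbound : ‖(∫ x in V, f x ∂μ) - G V‖ ≤ 4 * ε := by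
      refine le_of_tendsto hdiff.norm (Filter.Eventually.of_forall fun n => ?_)
      calc ‖∑ k ∈ Finset.range n, ((∫ x in s k, f x ∂μ) - G (s k))‖
          ≤ ∑ k ∈ Finset.range n, ‖(∫ x in s k, f x ∂μ) - G (s k)‖ := norm_sum_le _ _
        _ ≤ ∑ k ∈ Finset.range n, (‖(∫ x in s k, f x ∂μ) - (μ (s k)).toReal • f ((T k).1)‖ +
            ‖(μ (s k)).toReal • f ((T k).1) - G (s k)‖) := by
            refine Finset.sum_le_sum fun k _ => ?_
            calc ‖(∫ x in s k, f x ∂μ) - G (s k)‖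
                = ‖((∫ x in s k, f x ∂μ) - (μ (s k)).toReal • f ((T k).1)) +
                  ((μ (s k)).toReal • f ((T k).1) - G (s k))‖ := by congr 1; abel
              _ ≤ _ := norm_add_le _ _
        _ = (∑ k ∈ Finset.range n, ‖(∫ x in s k, f x ∂μ) - (μ (s k)).toReal • f ((T k).1)‖) +
            (∑ k ∈ Finset.range n, ‖(μ (s k)).toReal • f ((T k).1) - G (s k)‖) :=
            Finset.sum_add_distrib
        _ ≤ 3 * ε + ε := add_le_add (hAsum n) (hBsum n)
        _ = 4 * ε := by ring
    -- W part
    have hWnull : μ (Vᶜ ∩ KU) = 0 := by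
      have hsubN : Vᶜ ∩ KU ⊆ Set.univ \ ⋃ i ∈ I, (T i).2 := by
        rintro x ⟨hxV, hxKU⟩
        refine ⟨Set.mem_univ x, ?_⟩
        intro hxU
        obtain ⟨i, hiI, hxi⟩ : ∃ i ∈ I, x ∈ (T i).2 := by simpa using hxU
        by_cases htag : (T i).1 ∈ KU
        · refine hxV (Set.mem_iUnion.2 ⟨i, ?_⟩)
          simp only [hsdef]
          rw [if_pos ⟨hiI, htag⟩]
          exact hxi
        · have hempty := hR1 i hiI htag
          rw [Set.eq_empty_iff_forall_notMem] at hempty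
          exact hempty x ⟨hxi, hxKU⟩
      exact le_antisymm ((measure_mono hsubN).trans hexh.2.2.le) (zero_le)
    have hsplit : (∫ x in V, f x ∂μ) + (∫ x in Vᶜ, f x ∂μ) = ∫ x, f x ∂μ :=
      integral_add_compl hVmeas hInt
    have hGsplit : G Set.univ = G V + G Vᶜ := by
      have h1 : G (V ∪ Vᶜ) = G V + G Vᶜ :=
        aux_G_finAdd G hG0 hGadd hVmeas hVmeas.compl disjoint_compl_right
      rw [Set.union_compl_self] at h1
      exact h1
    have hWint : ‖∫ x in Vᶜ, f x ∂μ‖ ≤ 2 * ε := by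
      have h1 : ‖∫ x in Vᶜ, f x ∂μ‖ ≤ (∫⁻ x in Vᶜ, ENNReal.ofReal ‖f x‖ ∂μ).toReal :=
        norm_integral_le_lintegral_norm f
      have hcover : Vᶜ ⊆ ((Am)ᶜ ∪ ((Am \ KU) ∪ (Vᶜ ∩ KU))) := by
        intro x hx
        by_cases hx1 : x ∈ Am
        · by_cases hx2 : x ∈ KU
          · exact Or.inr (Or.inr ⟨hx, hx2⟩)
          · exact Or.inr (Or.inl ⟨hx1, hx2⟩)
        · exact Or.inl hx1
      have heq2 : ∀ s : Set X, ∫⁻ x in s, ENNReal.ofReal ‖f x‖ ∂μ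
          = ∫⁻ x in s, (‖f x‖₊ : ℝ≥0∞) ∂μ := by
        intro s
        refine lintegral_congr fun x => ?_
        exact ofReal_norm_eq_coe_nnnorm _
      have htail : ∫⁻ x in (Am)ᶜ, (‖f x‖₊:ℝ≥0∞) ∂μ ≤ ENNReal.ofReal ε := by
        refine le_trans (lintegral_mono_set ?_) hm₂
        refine Set.compl_subset_compl.2 ?_
        rw [hAmA]
        exact hAmono (le_max_right m₁ m₂)
      have hmid : ∫⁻ x in Am \ KU, (‖f x‖₊:ℝ≥0∞) ∂μ ≤ ENNReal.ofReal ε := by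
        refine (hδf _ ?_).le
        calc μ (Am \ KU) ≤ ENNReal.ofReal θ := hKμ
          _ ≤ ENNReal.ofReal δf2 := ENNReal.ofReal_le_ofReal (min_le_right _ _)
          _ < δf := hδf2lt
      have hz : ∫⁻ x in Vᶜ ∩ KU, (‖f x‖₊:ℝ≥0∞) ∂μ = 0 :=
        setLIntegral_measure_zero _ _ hWnull
      have h2 : ∫⁻ x in Vᶜ, (‖f x‖₊:ℝ≥0∞) ∂μ ≤ ENNReal.ofReal (2*ε) := by
        calc ∫⁻ x in Vᶜ, (‖f x‖₊:ℝ≥0∞) ∂μ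
            ≤ ∫⁻ x in ((Am)ᶜ ∪ ((Am \ KU) ∪ (Vᶜ ∩ KU))), (‖f x‖₊:ℝ≥0∞) ∂μ :=
              lintegral_mono_set hcover
          _ ≤ (∫⁻ x in (Am)ᶜ, (‖f x‖₊:ℝ≥0∞) ∂μ) +
              (∫⁻ x in (Am \ KU) ∪ (Vᶜ ∩ KU), (‖f x‖₊:ℝ≥0∞) ∂μ) := lintegral_union_le _ _ _
          _ ≤ (∫⁻ x in (Am)ᶜ, (‖f x‖₊:ℝ≥0∞) ∂μ) +
              ((∫⁻ x in Am \ KU, (‖f x‖₊:ℝ≥0∞) ∂μ) +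
               (∫⁻ x in Vᶜ ∩ KU, (‖f x‖₊:ℝ≥0∞) ∂μ)) :=
              add_le_add le_rfl (lintegral_union_le _ _ _)
          _ ≤ ENNReal.ofReal ε + (ENNReal.ofReal ε + 0) :=
              add_le_add htail (add_le_add hmid hz.le)
          _ = ENNReal.ofReal (2*ε) := by
              rw [add_zero, ← ENNReal.ofReal_add hε.le hε.le]
              congr 1
              ring
      refine h1.trans ?_
      rw [heq2]
      calc (∫⁻ x in Vᶜ, (‖f x‖₊:ℝ≥0∞) ∂μ).toReal
          ≤ (ENNReal.ofReal (2*ε)).toReal :=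
            ENNReal.toReal_mono ENNReal.ofReal_ne_top h2
        _ = 2 * ε := ENNReal.toReal_ofReal (by linarith)
    have hGW : ‖G Vᶜ‖ ≤ 2 * ε := by
      have hdisj3 : Disjoint (Vᶜ ∩ Am) (Vᶜ \ Am) :=
        disjoint_sdiff_self_right.mono_left Set.inter_subset_right
      have hsplit2 : G Vᶜ = G (Vᶜ ∩ Am) + G (Vᶜ \ Am) := by
        have h0 : G ((Vᶜ ∩ Am) ∪ (Vᶜ \ Am)) = G (Vᶜ ∩ Am) + G (Vᶜ \ Am) :=
          aux_G_finAdd G hG0 hGadd (hVmeas.compl.inter hAmmeas)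
            (hVmeas.compl.diff hAmmeas) hdisj3
        rw [Set.inter_union_diff] at h0
        exact h0
      have h1 : ‖G (Vᶜ \ Am)‖ ≤ ε := by
        refine hm₁ _ (hVmeas.compl.diff hAmmeas) ?_
        intro x hx
        intro hmem
        refine hx.2 ?_
        rw [hAmA]
        exact hAmono (le_max_left m₁ m₂) hmem
      have h2 : ‖G (Vᶜ ∩ Am)‖ ≤ ε := by
        refine hδG _ (hVmeas.compl.inter hAmmeas) ?_
        have hsub2 : Vᶜ ∩ Am ⊆ (Am \ KU) ∪ (Vᶜ ∩ KU) := by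
          rintro x ⟨hxV, hxA⟩
          by_cases hxK : x ∈ KU
          · exact Or.inr ⟨hxV, hxK⟩
          · exact Or.inl ⟨hxA, hxK⟩
        calc μ (Vᶜ ∩ Am) ≤ μ (Am \ KU) + μ (Vᶜ ∩ KU) :=
              (measure_mono hsub2).trans (measure_union_le _ _)
          _ ≤ ENNReal.ofReal θ + 0 := add_le_add hKμ hWnull.le
          _ = ENNReal.ofReal θ := add_zero _
          _ ≤ ENNReal.ofReal δG := ENNReal.ofReal_le_ofReal (min_le_left _ _)
      calc ‖G Vᶜ‖ = ‖G (Vᶜ ∩ Am) + G (Vᶜ \ Am)‖ := by rw [← hsplit2]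
        _ ≤ ‖G (Vᶜ ∩ Am)‖ + ‖G (Vᶜ \ Am)‖ := norm_add_le _ _
        _ ≤ 2 * ε := by linarith
    calc ‖(∫ x, f x ∂μ) - G Set.univ‖
        = ‖((∫ x in V, f x ∂μ) - G V) + ((∫ x in Vᶜ, f x ∂μ) - G Vᶜ)‖ := by
          rw [← hsplit, hGsplit]
          congr 1
          abel
      _ ≤ ‖(∫ x in V, f x ∂μ) - G V‖ + ‖(∫ x in Vᶜ, f x ∂μ) - G Vᶜ‖ := norm_add_le _ _
      _ ≤ ‖(∫ x in V, f x ∂μ) - G V‖ + (‖∫ x in Vᶜ, f x ∂μ‖ + ‖G Vᶜ‖) :=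
          add_le_add le_rfl (norm_sub_le _ _)
      _ ≤ 4*ε + (2*ε + 2*ε) := add_le_add hVbound (add_le_add hWint hGW)
      _ = 8 * ε := by ring
  by_contra hne
  have hpos : 0 < ‖(∫ x, f x ∂μ) - G Set.univ‖ := by
    rw [norm_pos_iff, sub_ne_zero]
    exact hne
  have := hKey (‖(∫ x, f x ∂μ) - G Set.univ‖ / 16) (by linarith)
  linarith

/-- Let `μ` be a Radon measure on `X`, `Y` a Banach space, and `𝒮` a `μ`-a.e. `λ`-Morse
cover of `X` with `μ(S \ S°) = 0` for each `S ∈ 𝒮`.  Suppose `G : M → Y` is countably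
additive (for every ordering of any pairwise disjoint measurable sequence), vanishes on
`μ`-null sets, and `sup { Σ_i ‖G(S_i)‖ : ⟨S_i⟩ μ-exhausting of X from 𝒮 } < ∞`.  If a
`μ`-measurable `f : X → Y` satisfies: for every `ε > 0` there is a gauge
`δ : X → (0,1]` such that every `δ`-fine `μ`-exhausting sequence `⟨S_i(x_i)⟩` from `𝒮`
has `Σ_i ‖f(x_i)·μ(S_i) − G(S_i)‖ < ε`, then `f` is Bochner `μ`-integrable and
`∫_X f dμ = G(X)`. -/
theorem bochner_integrable_of_riemann_sums
    {X Y : Type*} [NormedAddCommGroup X] [NormedSpace ℝ X] [FiniteDimensional ℝ X]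
    [MeasurableSpace X] [OpensMeasurableSpace X]
    [NormedAddCommGroup Y] [NormedSpace ℝ Y] [CompleteSpace Y]
    (μ : Measure X) [μ.Regular] [μ.IsComplete]
    (lam : ℝ) (hlam : 1 ≤ lam)
    (𝒮 : Set (X × Set X)) (h𝒮 : IsAEMorseCover μ lam Set.univ 𝒮)
    (hbdry : ∀ p ∈ 𝒮, μ (p.2 \ interior p.2) = 0)
    (G : Set X → Y)
    (hG0 : G ∅ = 0)
    (hGadd : ∀ E : ℕ → Set X, (∀ i, MeasurableSet (E i)) →
      (∀ i j, i ≠ j → Disjoint (E i) (E j)) →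
      Filter.Tendsto (fun n => ∑ i ∈ Finset.range n, G (E i)) Filter.atTop
        (nhds (G (⋃ i, E i))))
    (hGnull : ∀ E : Set X, MeasurableSet E → μ E = 0 → G E = 0)
    (M : ENNReal) (hM : M < ⊤)
    (hMsup : ∀ (I : Set ℕ) (T : ℕ → X × Set X), IsExhausting μ Set.univ 𝒮 I T →
      (∑' i : I, (‖G (T i).2‖₊ : ENNReal)) ≤ M)
    (f : X → Y) (hf : MuMeasurable μ f)
    (hriemann : ∀ ε > (0:ℝ), ∃ δ : X → ℝ, (∀ x : X, δ x ∈ Set.Ioc (0:ℝ) 1) ∧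
      ∀ (I : Set ℕ) (T : ℕ → X × Set X), IsExhausting μ Set.univ 𝒮 I T →
        (∀ i ∈ I, (T i).2 ⊆ Metric.closedBall (T i).1 (δ (T i).1)) →
        (∑' i : I, (‖(μ (T i).2).toReal • f (T i).1 - G (T i).2‖₊ : ENNReal)) <
          ENNReal.ofReal ε) :
    Integrable f μ ∧ ∫ x, f x ∂μ = G Set.univ := by
  classical
  cases isEmpty_or_nonempty X with
  | inl hX =>
      have hmu0 : μ = 0 := by
        ext s _
        have hs' : s = ∅ := Set.eq_empty_of_isEmpty s
        simp [hs']
      constructor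
      · rw [hmu0]; exact integrable_zero_measure
      · rw [hmu0, integral_zero_measure]
        have huniv : (Set.univ : Set X) = ∅ := Set.univ_eq_empty_iff.2 hX
        rw [huniv, hG0]
  | inr hX =>
      have hInt : Integrable f μ :=
        aux_integrable μ lam hlam 𝒮 h𝒮 G M hM hMsup f hf hriemann
      exact ⟨hInt, aux_integral_eq μ lam hlam 𝒮 h𝒮 G hG0 hGadd hGnull f hInt hriemann⟩
end
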